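/- arXiv:2210.11185 — 13 statements merged into one kernel-verified Lean document; each statement's English description precedes it below -/
import Mathlib

section
/- Let a ≤ b be integers, let f : ℤ → ℤ be monotonically nondecreasing, and suppose the image f([a,b] ∩ ℤ) has at most n elements. Define the iteration t₀ = a and t_{k+1} = f(t_k). Then one of the following holds: (1) f(a) ≤ a; or (2) there exists k ≤ n such that a ≤ t_k ≤ b and f(t_k) = t_k, and moreover t_k is the smallest fixed point of f in [a,b]; or (3) there exists k ≤ n with t_k > b, and f has no fixed point in [a,b]. -/
/-- Fixed-point iteration for a monotone step function on an integer interval: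
either `f a ≤ a`; or within `n` iterations we reach the least fixed point of `f`
in `[a, b]`; or within `n` iterations we exceed `b` and `f` has no fixed point
in `[a, b]`. -/
theorem stmt_0 (a b : ℤ) (hab : a ≤ b) (f : ℤ → ℤ) (hf : Monotone f)
    (n : ℕ) (hcard : (f '' Set.Icc a b).ncard ≤ n)
    (t : ℕ → ℤ) (ht0 : t 0 = a) (hts : ∀ k, t (k + 1) = f (t k)) :
    f a ≤ a ∨
    (∃ k ≤ n, a ≤ t k ∧ t k ≤ b ∧ f (t k) = t k ∧
      ∀ s : ℤ, a ≤ s → s ≤ b → f s = s → t k ≤ s) ∨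
    ((∃ k ≤ n, b < t k) ∧ ∀ s : ℤ, a ≤ s → s ≤ b → f s ≠ s) := by
  by_cases hfa : f a ≤ a
  · exact Or.inl hfa
  push_neg at hfa
  have hstep : ∀ k, t k ≤ t (k + 1) := by
    intro k
    induction k with
    | zero => rw [hts, ht0]; exact hfa.le
    | succ k ih =>
      rw [hts k] at ih
      rw [hts (k + 1), hts k]
      exact hf ih
  have hmono : Monotone t := monotone_nat_of_le_succ hstep
  have hlow : ∀ k, a ≤ t k := fun k => ht0 ▸ hmono (Nat.zero_le k)
  have hle_fix : ∀ s : ℤ, a ≤ s → f s = s → ∀ k, t k ≤ s := by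
    intro s has hfs k
    induction k with
    | zero => rw [ht0]; exact has
    | succ k ih =>
      rw [hts]
      calc f (t k) ≤ f s := hf ih
        _ = s := hfs
  by_cases hb : ∃ k ≤ n, b < t k
  · right; right
    refine ⟨hb, fun s hs1 hs2 hfs => ?_⟩
    obtain ⟨k, hk, hbk⟩ := hb
    exact absurd ((hle_fix s hs1 hfs k).trans hs2) (not_le.mpr hbk)
  · push_neg at hb
    right; left
    have hmem : ∀ k ≤ n, t k ∈ Set.Icc a b := fun k hk => ⟨hlow k, hb k hk⟩
    have hfin : (f '' Set.Icc a b).Finite := (Set.finite_Icc a b).image f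
    have hpig : ∃ x ∈ Finset.range (n + 1), ∃ y ∈ Finset.range (n + 1),
        x ≠ y ∧ t (x + 1) = t (y + 1) := by
      apply Finset.exists_ne_map_eq_of_card_lt_of_maps_to
      · rw [Finset.card_range]
        calc hfin.toFinset.card = (f '' Set.Icc a b).ncard :=
              (Set.ncard_eq_toFinset_card _ hfin).symm
          _ ≤ n := hcard
          _ < n + 1 := Nat.lt_succ_self n
      · intro k hk
        beta_reduce
        rw [Finset.mem_coe, Set.Finite.mem_toFinset, hts]
        exact Set.mem_image_of_mem f (hmem k (Nat.lt_succ_iff.mp (Finset.mem_range.mp hk)))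
    obtain ⟨x, hx, y, hy, hxy, heq⟩ := hpig
    wlog hxy' : x < y generalizing x y
    · exact this y hy x hx hxy.symm heq.symm (hxy.lt_or_gt.resolve_left hxy')
    have hxn : x + 1 ≤ n := Nat.lt_succ_iff.mp (Finset.mem_range.mp hy) |>.trans_lt' hxy' |> Nat.succ_le_of_lt
    have hfix : f (t (x + 1)) = t (x + 1) := by
      rw [← hts]
      have h1 : t (x + 1) ≤ t (x + 1 + 1) := hstep (x + 1)
      have h2 : t (x + 1 + 1) ≤ t (y + 1) := hmono (by omega)
      omega
    exact ⟨x + 1, hxn, hlow _, hb _ hxn, hfix,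
      fun s hs1 hs2 hfs => hle_fix s hs1 hfs (x + 1)⟩
end

section
/- In the kernel setting, if the set K = {t ∈ [a,b] ∩ ℤ : φ(t) ≤ t} has a minimum t* and t* > a, then φ(t*) = t*, and t* is the smallest fixed point of φ in [a,b]: for every s ∈ [a,b] ∩ ℤ with φ(s) = s one has t* ≤ s. -/
/-- Kernel setting: if the set `{t ∈ [a,b] ∩ ℤ : φ t ≤ t}` has a minimum `t*`
with `t* > a`, then `φ t* = t*` and `t*` is the smallest fixed point of `φ`
in `[a, b]`. -/
theorem stmt_1 (n : ℕ) (C T α : ℕ → ℤ) (β a b : ℤ)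
    (hC : ∀ i ∈ Finset.Icc 1 n, 0 < C i)
    (hT : ∀ i ∈ Finset.Icc 1 n, 0 < T i)
    (hU : ∑ j ∈ Finset.Icc 1 n, (C j : ℚ) / (T j : ℚ) ≤ 1)
    (φ : ℤ → ℤ)
    (hφ : ∀ t : ℤ, φ t = (∑ j ∈ Finset.Icc 1 n, ⌈((t : ℚ) + (α j : ℚ)) / (T j : ℚ)⌉ * C j) + β)
    (tstar : ℤ)
    (hmin : IsLeast {t : ℤ | a ≤ t ∧ t ≤ b ∧ φ t ≤ t} tstar)
    (hgt : a < tstar) :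
    φ tstar = tstar ∧ ∀ s : ℤ, a ≤ s → s ≤ b → φ s = s → tstar ≤ s := by
  obtain ⟨⟨ha, hb, hle⟩, hlb⟩ := hmin
  have hmono : ∀ t t' : ℤ, t ≤ t' → φ t ≤ φ t' := by
    intro t t' htt
    rw [hφ, hφ]
    apply add_le_add_left
    apply Finset.sum_le_sum
    intro i hi
    apply mul_le_mul_of_nonneg_right _ (hC i hi).le
    apply Int.ceil_le_ceil
    have hTpos : (0:ℚ) < T i := by exact_mod_cast hT i hi
    gcongr
  constructor
  · by_contra hne
    have hlt : φ tstar < tstar := lt_of_le_of_ne hle hne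
    have h1 : φ (tstar - 1) ≤ tstar - 1 :=
      le_trans (hmono (tstar-1) tstar (by linarith)) (by linarith)
    have : tstar ≤ tstar - 1 := hlb ⟨by linarith, by linarith, h1⟩
    linarith
  · intro s hs1 hs2 hfix
    exact hlb ⟨hs1, hs2, hfix.le⟩
end

section
/- In the kernel setting, for integers a ≤ b, the number of distinct values taken by φ on [a,b] ∩ ℤ satisfies |{φ(t) : t ∈ ℤ, a ≤ t ≤ b}| ≤ 1 + Σ_{j∈[n]} ⌈(b−a)/T_j⌉. -/
/-- Kernel setting: the number of distinct values taken by `φ` on `[a,b] ∩ ℤ`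
is at most `1 + Σ_j ⌈(b−a)/T_j⌉`. -/
theorem stmt_2 (n : ℕ) (C T α : ℕ → ℤ) (β a b : ℤ) (hab : a ≤ b)
    (hC : ∀ i ∈ Finset.Icc 1 n, 0 < C i)
    (hT : ∀ i ∈ Finset.Icc 1 n, 0 < T i)
    (hU : ∑ j ∈ Finset.Icc 1 n, (C j : ℚ) / (T j : ℚ) ≤ 1)
    (φ : ℤ → ℤ)
    (hφ : ∀ t : ℤ, φ t = (∑ j ∈ Finset.Icc 1 n, ⌈((t : ℚ) + (α j : ℚ)) / (T j : ℚ)⌉ * C j) + β) :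
    ((φ '' Set.Icc a b).ncard : ℤ) ≤
      1 + ∑ j ∈ Finset.Icc 1 n, ⌈((b : ℚ) - (a : ℚ)) / (T j : ℚ)⌉ := by
  classical
  set g : ℕ → ℤ → ℤ := fun j t => ⌈((t : ℚ) + (α j : ℚ)) / (T j : ℚ)⌉ with hg
  set M : ℤ := ∑ j ∈ Finset.Icc 1 n, ⌈((b : ℚ) - (a : ℚ)) / (T j : ℚ)⌉ with hM
  set Ψ : ℤ → ℤ := fun t => ∑ j ∈ Finset.Icc 1 n, (g j t - g j a) with hΨ
  set S : Set ℤ := Set.Icc a b with hS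
  -- monotonicity of each ceiling term
  have hmono : ∀ j ∈ Finset.Icc 1 n, ∀ t s : ℤ, t ≤ s → g j t ≤ g j s := by
    intro j hj t s hts
    apply Int.ceil_le_ceil
    have hTj : (0 : ℚ) < (T j : ℚ) := by exact_mod_cast hT j hj
    have hts' : (t : ℚ) ≤ (s : ℚ) := by exact_mod_cast hts
    gcongr
  -- each term bounded by the ceiling of (b-a)/T
  have hbound : ∀ j ∈ Finset.Icc 1 n, ∀ t ∈ S,
      g j t - g j a ≤ ⌈((b : ℚ) - (a : ℚ)) / (T j : ℚ)⌉ := by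
    intro j hj t ht
    have h1 : g j t ≤ g j b := hmono j hj t b ht.2
    have h2 : g j b ≤ ⌈((b : ℚ) - (a : ℚ)) / (T j : ℚ)⌉ + g j a := by
      have heq : ((b : ℚ) + (α j : ℚ)) / (T j : ℚ)
          = ((b : ℚ) - (a : ℚ)) / (T j : ℚ) + ((a : ℚ) + (α j : ℚ)) / (T j : ℚ) := by
        rw [← add_div]; ring_nf
      calc g j b = ⌈((b : ℚ) - (a : ℚ)) / (T j : ℚ) + ((a : ℚ) + (α j : ℚ)) / (T j : ℚ)⌉ := by
            simp only [hg]; rw [heq]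
        _ ≤ ⌈((b : ℚ) - (a : ℚ)) / (T j : ℚ)⌉ + ⌈((a : ℚ) + (α j : ℚ)) / (T j : ℚ)⌉ :=
            Int.ceil_add_le _ _
        _ = ⌈((b : ℚ) - (a : ℚ)) / (T j : ℚ)⌉ + g j a := rfl
    omega
  -- Ψ t = Ψ s implies φ t = φ s (for t ≤ s, hence in general)
  have key : ∀ t s : ℤ, t ≤ s → Ψ t = Ψ s → φ t = φ s := by
    intro t s hts h
    have h0 : ∑ j ∈ Finset.Icc 1 n, (g j s - g j t) = 0 := by
      have : (∑ j ∈ Finset.Icc 1 n, (g j s - g j a))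
          - (∑ j ∈ Finset.Icc 1 n, (g j t - g j a))
          = ∑ j ∈ Finset.Icc 1 n, (g j s - g j t) := by
        rw [← Finset.sum_sub_distrib]; apply Finset.sum_congr rfl; intro j _; ring
      have hΨeq : Ψ s - Ψ t = 0 := by omega
      simp only [hΨ] at hΨeq
      omega
    have heach : ∀ j ∈ Finset.Icc 1 n, g j s - g j t = 0 :=
      (Finset.sum_eq_zero_iff_of_nonneg
        (fun j hj => sub_nonneg.mpr (hmono j hj t s hts))).mp h0
    rw [hφ t, hφ s]
    congr 1
    apply Finset.sum_congr rfl
    intro j hj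
    have := heach j hj
    have hgeq : g j t = g j s := by omega
    simp only [hg] at hgeq
    rw [hgeq]
  have key' : ∀ t s : ℤ, Ψ t = Ψ s → φ t = φ s := by
    intro t s h
    rcases le_total t s with h' | h'
    · exact key t s h' h
    · exact (key s t h' h.symm).symm
  -- φ '' S = u '' (Ψ '' S) for u = φ ∘ invFunOn Ψ S
  set u : ℤ → ℤ := φ ∘ Function.invFunOn Ψ S with hu
  have himg : φ '' S = u '' (Ψ '' S) := by
    ext v
    constructor
    · rintro ⟨t, ht, rfl⟩
      refine ⟨Ψ t, ⟨t, ht, rfl⟩, ?_⟩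
      simp only [hu, Function.comp_apply]
      exact key' _ _ (Function.invFunOn_eq ⟨t, ht, rfl⟩)
    · rintro ⟨w, ⟨t, ht, rfl⟩, rfl⟩
      have hmem : Function.invFunOn Ψ S (Ψ t) ∈ S := Function.invFunOn_mem ⟨t, ht, rfl⟩
      exact ⟨_, hmem, rfl⟩
  have hSfin : S.Finite := Set.finite_Icc a b
  have hΨfin : (Ψ '' S).Finite := hSfin.image Ψ
  -- Ψ '' S ⊆ Icc 0 M
  have hsub : Ψ '' S ⊆ Set.Icc (0 : ℤ) M := by
    rintro w ⟨t, ht, rfl⟩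
    constructor
    · apply Finset.sum_nonneg
      intro j hj
      exact sub_nonneg.mpr (hmono j hj a t ht.1)
    · rw [hM]
      exact Finset.sum_le_sum fun j hj => hbound j hj t ht
  have hM0 : 0 ≤ M := by
    have : (a : ℤ) ∈ S := ⟨le_refl a, hab⟩
    have := hsub ⟨a, this, rfl⟩
    exact le_trans this.1 this.2
  have hcard : (φ '' S).ncard ≤ (M + 1).toNat := by
    calc (φ '' S).ncard = (u '' (Ψ '' S)).ncard := by rw [himg]
      _ ≤ (Ψ '' S).ncard := Set.ncard_image_le hΨfin
      _ ≤ (Set.Icc (0 : ℤ) M).ncard := Set.ncard_le_ncard hsub (Set.finite_Icc 0 M)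
      _ = (M + 1).toNat := by
          rw [← Finset.coe_Icc, Set.ncard_coe_finset, Int.card_Icc]
          omega
  have : ((φ '' S).ncard : ℤ) ≤ M + 1 := by
    calc ((φ '' S).ncard : ℤ) ≤ ((M + 1).toNat : ℤ) := by exact_mod_cast hcard
      _ = M + 1 := by omega
  omega
end

section
/- In the kernel setting, let S = {(t,x) ∈ ℤ × ℤⁿ : a ≤ t ≤ b, t − Σ_{j∈[n]} C_j·x_j ≥ β, T_i·x_i − t ≥ α_i for all i ∈ [n], and x_i ≥ ⌈(a+α_i)/T_i⌉ for all i ∈ [n]} (the feasible set of IP-KERN). Then: (1) for every integer t ∈ [a,b], φ(t) ≤ t holds if and only if there exists x ∈ ℤⁿ with (t,x) ∈ S; consequently (2) t* is the minimum of {t ∈ [a,b] ∩ ℤ : φ(t) ≤ t} if and only if there exists x* ∈ ℤⁿ such that (t*,x*) ∈ S and t* ≤ t for every (t,x) ∈ S. -/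
/-- Kernel setting: `S` is the feasible set of IP-KERN. (1) For `t ∈ [a,b] ∩ ℤ`,
`φ t ≤ t` iff some `x` makes `(t, x)` feasible; (2) `t*` minimizes the kernel
problem iff some `(t*, x*)` is feasible for IP-KERN and `t*` is a lower bound
on all feasible `t`. -/
theorem stmt_3 (n : ℕ) (C T α : ℕ → ℤ) (β a b : ℤ)
    (hC : ∀ i ∈ Finset.Icc 1 n, 0 < C i)
    (hT : ∀ i ∈ Finset.Icc 1 n, 0 < T i)
    (hU : ∑ j ∈ Finset.Icc 1 n, (C j : ℚ) / (T j : ℚ) ≤ 1)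
    (φ : ℤ → ℤ)
    (hφ : ∀ t : ℤ, φ t = (∑ j ∈ Finset.Icc 1 n, ⌈((t : ℚ) + (α j : ℚ)) / (T j : ℚ)⌉ * C j) + β)
    (S : Set (ℤ × (ℕ → ℤ)))
    (hS : S = {p : ℤ × (ℕ → ℤ) | a ≤ p.1 ∧ p.1 ≤ b ∧
      p.1 - ∑ j ∈ Finset.Icc 1 n, C j * p.2 j ≥ β ∧
      (∀ i ∈ Finset.Icc 1 n, T i * p.2 i - p.1 ≥ α i) ∧
      (∀ i ∈ Finset.Icc 1 n, p.2 i ≥ ⌈((a : ℚ) + (α i : ℚ)) / (T i : ℚ)⌉)}) :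
    (∀ t : ℤ, a ≤ t → t ≤ b → (φ t ≤ t ↔ ∃ x : ℕ → ℤ, (t, x) ∈ S)) ∧
    (∀ tstar : ℤ,
      IsLeast {t : ℤ | a ≤ t ∧ t ≤ b ∧ φ t ≤ t} tstar ↔
      ∃ xstar : ℕ → ℤ, (tstar, xstar) ∈ S ∧ ∀ p ∈ S, tstar ≤ p.1) := by
  subst hS
  have key : ∀ i ∈ Finset.Icc 1 n, ∀ t x : ℤ,
      ⌈((t : ℚ) + (α i : ℚ)) / (T i : ℚ)⌉ ≤ x ↔ α i ≤ T i * x - t := by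
    intro i hi t x
    have hTQ : (0 : ℚ) < (T i : ℚ) := by exact_mod_cast hT i hi
    rw [Int.ceil_le, div_le_iff₀ hTQ]
    have hcast : ((t : ℚ) + (α i : ℚ) ≤ (x : ℚ) * (T i : ℚ)) ↔ (t + α i ≤ x * T i) := by
      exact_mod_cast Iff.rfl
    rw [hcast]
    constructor <;> intro h <;> nlinarith [h, mul_comm x (T i)]
  have step1 : ∀ t : ℤ, a ≤ t → t ≤ b →
      (φ t ≤ t ↔ ∃ x : ℕ → ℤ, (t, x) ∈ {p : ℤ × (ℕ → ℤ) | a ≤ p.1 ∧ p.1 ≤ b ∧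
        p.1 - ∑ j ∈ Finset.Icc 1 n, C j * p.2 j ≥ β ∧
        (∀ i ∈ Finset.Icc 1 n, T i * p.2 i - p.1 ≥ α i) ∧
        (∀ i ∈ Finset.Icc 1 n, p.2 i ≥ ⌈((a : ℚ) + (α i : ℚ)) / (T i : ℚ)⌉)}) := by
    intro t ha hb
    constructor
    · intro hphit
      refine ⟨fun i => ⌈((t : ℚ) + (α i : ℚ)) / (T i : ℚ)⌉, ha, hb, ?_, ?_, ?_⟩
      · have : (∑ j ∈ Finset.Icc 1 n, C j * ⌈((t : ℚ) + (α j : ℚ)) / (T j : ℚ)⌉)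
            = ∑ j ∈ Finset.Icc 1 n, ⌈((t : ℚ) + (α j : ℚ)) / (T j : ℚ)⌉ * C j := by
          exact Finset.sum_congr rfl fun j _ => mul_comm _ _
        rw [hφ t] at hphit
        simp only [this]
        linarith
      · intro i hi
        have := (key i hi t _).mp (le_refl ⌈((t : ℚ) + (α i : ℚ)) / (T i : ℚ)⌉)
        linarith
      · intro i hi
        apply Int.ceil_le_ceil
        have hTQ : (0 : ℚ) < (T i : ℚ) := by exact_mod_cast hT i hi
        have haq : (a : ℚ) ≤ (t : ℚ) := by exact_mod_cast ha
        gcongr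
    · rintro ⟨x, _, _, h3, h4, _⟩
      rw [hφ t]
      have hsum : (∑ j ∈ Finset.Icc 1 n, ⌈((t : ℚ) + (α j : ℚ)) / (T j : ℚ)⌉ * C j)
          ≤ ∑ j ∈ Finset.Icc 1 n, C j * x j := by
        apply Finset.sum_le_sum
        intro j hj
        have hce : ⌈((t : ℚ) + (α j : ℚ)) / (T j : ℚ)⌉ ≤ x j := (key j hj t (x j)).mpr (h4 j hj)
        calc ⌈((t : ℚ) + (α j : ℚ)) / (T j : ℚ)⌉ * C j ≤ x j * C j :=
              mul_le_mul_of_nonneg_right hce (le_of_lt (hC j hj))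
          _ = C j * x j := mul_comm _ _
      linarith
  refine ⟨step1, ?_⟩
  intro tstar
  constructor
  · rintro ⟨⟨ha, hb, hphi⟩, hlb⟩
    obtain ⟨x, hx⟩ := (step1 tstar ha hb).mp hphi
    refine ⟨x, hx, ?_⟩
    rintro ⟨t, y⟩ hp
    obtain ⟨ha', hb', -, -, -⟩ := id hp
    exact hlb ⟨ha', hb', (step1 t ha' hb').mpr ⟨y, hp⟩⟩
  · rintro ⟨xstar, hxs, hlb⟩
    obtain ⟨ha, hb, -, -, -⟩ := id hxs
    refine ⟨⟨ha, hb, (step1 tstar ha hb).mpr ⟨xstar, hxs⟩⟩, ?_⟩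
    rintro t ⟨ha', hb', hphi⟩
    obtain ⟨y, hy⟩ := (step1 t ha' hb').mp hphi
    exact hlb (t, y) hy
end

section
/- In the kernel setting, if Σ_{j∈[n]} U_j = 1 and β + Σ_{j∈[n]} U_j·α_j > 0, then there is no pair (t,x) ∈ ℝ × ℝⁿ satisfying both t − Σ_{j∈[n]} C_j·x_j ≥ β and T_i·x_i − t ≥ α_i for all i ∈ [n]; in particular, the integer program IP-KERN is infeasible. -/
lemma stmt_8_aux (n : ℕ) (C T α : ℕ → ℤ) (β : ℤ)
    (hC : ∀ i ∈ Finset.Icc 1 n, 0 < C i)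
    (hT : ∀ i ∈ Finset.Icc 1 n, 0 < T i)
    (hU1 : ∑ j ∈ Finset.Icc 1 n, (C j : ℚ) / (T j : ℚ) = 1)
    (hpos : (β : ℚ) + ∑ j ∈ Finset.Icc 1 n, (C j : ℚ) / (T j : ℚ) * (α j : ℚ) > 0) :
    ¬ ∃ (t : ℝ) (x : ℕ → ℝ),
      t - ∑ j ∈ Finset.Icc 1 n, (C j : ℝ) * x j ≥ (β : ℝ) ∧
      ∀ i ∈ Finset.Icc 1 n, (T i : ℝ) * x i - t ≥ (α i : ℝ) := by
  rintro ⟨t, x, h1, h2⟩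
  have hU1' : ∑ j ∈ Finset.Icc 1 n, (C j : ℝ) / (T j : ℝ) = 1 := by
    have := congrArg (fun q : ℚ => (q : ℝ)) hU1
    push_cast at this
    exact this
  have hpos' : (β : ℝ) + ∑ j ∈ Finset.Icc 1 n, (C j : ℝ) / (T j : ℝ) * (α j : ℝ) > 0 := by
    exact_mod_cast hpos
  -- key pointwise bound: C i * x i ≥ (C i / T i) * (t + α i)
  have key : ∀ i ∈ Finset.Icc 1 n,
      (C i : ℝ) / (T i : ℝ) * (t + (α i : ℝ)) ≤ (C i : ℝ) * x i := by
    intro i hi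
    have hTi : (0:ℝ) < (T i : ℝ) := by exact_mod_cast hT i hi
    have hCi : (0:ℝ) < (C i : ℝ) := by exact_mod_cast hC i hi
    have hx : (t + (α i : ℝ)) / (T i : ℝ) ≤ x i := by
      rw [div_le_iff₀ hTi]
      have := h2 i hi
      nlinarith [h2 i hi]
    calc (C i : ℝ) / (T i : ℝ) * (t + (α i : ℝ))
        = (C i : ℝ) * ((t + (α i : ℝ)) / (T i : ℝ)) := by ring
      _ ≤ (C i : ℝ) * x i := by nlinarith
  have hsum : ∑ j ∈ Finset.Icc 1 n, (C j : ℝ) / (T j : ℝ) * (t + (α j : ℝ))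
      ≤ ∑ j ∈ Finset.Icc 1 n, (C j : ℝ) * x j := Finset.sum_le_sum key
  have hexp : ∑ j ∈ Finset.Icc 1 n, (C j : ℝ) / (T j : ℝ) * (t + (α j : ℝ))
      = t + ∑ j ∈ Finset.Icc 1 n, (C j : ℝ) / (T j : ℝ) * (α j : ℝ) := by
    rw [Finset.sum_congr rfl (fun j _ => by ring :
      ∀ j ∈ Finset.Icc 1 n, (C j : ℝ) / (T j : ℝ) * (t + (α j : ℝ))
        = (C j : ℝ) / (T j : ℝ) * t + (C j : ℝ) / (T j : ℝ) * (α j : ℝ)),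
      Finset.sum_add_distrib, ← Finset.sum_mul, hU1', one_mul]
  rw [hexp] at hsum
  linarith

/-- Kernel setting: if `Σ U_j = 1` and `β + Σ U_j α_j > 0`, then no real pair
`(t, x)` satisfies `t − Σ C_j x_j ≥ β` and `T_i x_i − t ≥ α_i` for all `i`;
in particular IP-KERN is infeasible. -/
theorem stmt_8 (n : ℕ) (C T α : ℕ → ℤ) (β a b : ℤ)
    (hC : ∀ i ∈ Finset.Icc 1 n, 0 < C i)
    (hT : ∀ i ∈ Finset.Icc 1 n, 0 < T i)
    (hU1 : ∑ j ∈ Finset.Icc 1 n, (C j : ℚ) / (T j : ℚ) = 1)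
    (hpos : (β : ℚ) + ∑ j ∈ Finset.Icc 1 n, (C j : ℚ) / (T j : ℚ) * (α j : ℚ) > 0) :
    (¬ ∃ (t : ℝ) (x : ℕ → ℝ),
      t - ∑ j ∈ Finset.Icc 1 n, (C j : ℝ) * x j ≥ (β : ℝ) ∧
      ∀ i ∈ Finset.Icc 1 n, (T i : ℝ) * x i - t ≥ (α i : ℝ)) ∧
    (¬ ∃ (t : ℤ) (x : ℕ → ℤ), a ≤ t ∧ t ≤ b ∧
      t - ∑ j ∈ Finset.Icc 1 n, C j * x j ≥ β ∧
      (∀ i ∈ Finset.Icc 1 n, T i * x i - t ≥ α i) ∧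
      (∀ i ∈ Finset.Icc 1 n, x i ≥ ⌈((a : ℚ) + (α i : ℚ)) / (T i : ℚ)⌉)) := by
  have hreal := stmt_8_aux n C T α β hC hT hU1 hpos
  refine ⟨hreal, ?_⟩
  rintro ⟨t, x, _, _, h1, h2, _⟩
  refine hreal ⟨(t : ℝ), fun i => (x i : ℝ), ?_, fun i hi => ?_⟩
  · show (t:ℝ) - ∑ j ∈ Finset.Icc 1 n, (C j : ℝ) * ((x j : ℤ) : ℝ) ≥ (β : ℝ)
    exact_mod_cast h1
  · show (T i : ℝ) * ((x i : ℤ) : ℝ) - (t:ℝ) ≥ (α i : ℝ)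
    exact_mod_cast h2 i hi
end

section
/- In the kernel setting with ux ∈ ℤⁿ, let k ∈ [n] be such that f(k−1) is well-defined, i.e., q_{k−1} := 1 − Σ_{j∈[n]∖[k−1]} U_j > 0, and set q_k := 1 − Σ_{j∈[n]∖[k]} U_j. Then (f(k) − f(k−1))/U_k = (T_k·ux_k − α_k − f(k))/q_{k−1} = (T_k·ux_k − α_k − f(k−1))/q_k, and consequently sgn(f(k) − f(k−1)) = sgn(T_k·ux_k − α_k − f(k)) = sgn(T_k·ux_k − α_k − f(k−1)). -/
/-- Kernel setting: identities relating `f(k) − f(k−1)`, `T_k·ux_k − α_k − f(k)`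
and `T_k·ux_k − α_k − f(k−1)`, together with the resulting sign equalities. -/
theorem stmt_9 (n : ℕ) (C T α ux : ℕ → ℤ) (β : ℤ)
    (hC : ∀ i ∈ Finset.Icc 1 n, 0 < C i)
    (hT : ∀ i ∈ Finset.Icc 1 n, 0 < T i)
    (hU : ∑ j ∈ Finset.Icc 1 n, (C j : ℚ) / (T j : ℚ) ≤ 1)
    (f : ℕ → ℚ)
    (hf : ∀ m : ℕ, f m =
      ((β : ℚ) + ∑ j ∈ Finset.Icc (m + 1) n, (C j : ℚ) / (T j : ℚ) * (α j : ℚ) +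
        ∑ j ∈ Finset.Icc 1 m, (C j : ℚ) * (ux j : ℚ)) /
      (1 - ∑ j ∈ Finset.Icc (m + 1) n, (C j : ℚ) / (T j : ℚ)))
    (k : ℕ) (hk1 : 1 ≤ k) (hkn : k ≤ n)
    (hq : 0 < 1 - ∑ j ∈ Finset.Icc k n, (C j : ℚ) / (T j : ℚ)) :
    ((f k - f (k - 1)) / ((C k : ℚ) / (T k : ℚ)) =
        ((T k : ℚ) * (ux k : ℚ) - (α k : ℚ) - f k) /
          (1 - ∑ j ∈ Finset.Icc k n, (C j : ℚ) / (T j : ℚ)) ∧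
      (f k - f (k - 1)) / ((C k : ℚ) / (T k : ℚ)) =
        ((T k : ℚ) * (ux k : ℚ) - (α k : ℚ) - f (k - 1)) /
          (1 - ∑ j ∈ Finset.Icc (k + 1) n, (C j : ℚ) / (T j : ℚ))) ∧
    (SignType.sign (f k - f (k - 1)) =
        SignType.sign ((T k : ℚ) * (ux k : ℚ) - (α k : ℚ) - f k) ∧
      SignType.sign (f k - f (k - 1)) =
        SignType.sign ((T k : ℚ) * (ux k : ℚ) - (α k : ℚ) - f (k - 1))) := by
  have hkmem : k ∈ Finset.Icc 1 n := Finset.mem_Icc.2 ⟨hk1, hkn⟩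
  have hTk : (0:ℚ) < (T k : ℚ) := by exact_mod_cast hT k hkmem
  have hCk : (0:ℚ) < (C k : ℚ) := by exact_mod_cast hC k hkmem
  have hsplit1 : ∀ g : ℕ → ℚ, ∑ j ∈ Finset.Icc k n, g j
      = g k + ∑ j ∈ Finset.Icc (k+1) n, g j := by
    intro g
    have hins : Finset.Icc k n = insert k (Finset.Icc (k+1) n) := by
      ext x; simp [Finset.mem_Icc, Finset.mem_insert]; omega
    rw [hins, Finset.sum_insert (by simp)]
  have hsplit2 : ∀ g : ℕ → ℚ, ∑ j ∈ Finset.Icc 1 k, g j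
      = ∑ j ∈ Finset.Icc 1 (k-1), g j + g k := by
    intro g
    have hkk : k = (k-1) + 1 := by omega
    rw [hkk, Finset.sum_Icc_succ_top (by omega)]
    simp
  have hk' : k - 1 + 1 = k := by omega
  obtain ⟨S, hS⟩ : ∃ S, (∑ j ∈ Finset.Icc (k+1) n, (C j : ℚ) / (T j : ℚ)) = S := ⟨_, rfl⟩
  obtain ⟨Sα, hSα⟩ : ∃ x, (∑ j ∈ Finset.Icc (k+1) n, (C j : ℚ) / (T j : ℚ) * (α j : ℚ)) = x := ⟨_, rfl⟩
  obtain ⟨SC, hSC⟩ : ∃ x, (∑ j ∈ Finset.Icc 1 (k-1), (C j : ℚ) * (ux j : ℚ)) = x := ⟨_, rfl⟩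
  obtain ⟨W, hW⟩ : ∃ x, (C k : ℚ) / (T k : ℚ) = x := ⟨_, rfl⟩
  have hWpos : 0 < W := by rw [← hW]; exact div_pos hCk hTk
  have hCkT : (C k : ℚ) = W * (T k : ℚ) := by rw [← hW]; field_simp
  have hqS : (1:ℚ) - ∑ j ∈ Finset.Icc k n, (C j : ℚ) / (T j : ℚ) = 1 - (W + S) := by
    rw [hsplit1 (fun j => (C j : ℚ) / (T j : ℚ))]; rw [hS, hW]
  have hq' : 0 < 1 - (W + S) := by rw [← hqS]; exact hq
  have hqk : 0 < 1 - S := by linarith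
  have hfk : f k = ((β:ℚ) + Sα + (SC + W * (T k : ℚ) * (ux k : ℚ))) / (1 - S) := by
    rw [hf k, hsplit2 (fun j => (C j : ℚ) * (ux j : ℚ))]
    rw [hS, hSα, hSC, hCkT]
  have hfk1 : f (k-1) = ((β:ℚ) + (W * (α k : ℚ) + Sα) + SC) / (1 - (W + S)) := by
    rw [hf (k-1), hk', hsplit1 (fun j => (C j : ℚ) / (T j : ℚ) * (α j : ℚ)),
      hsplit1 (fun j => (C j : ℚ) / (T j : ℚ))]
    rw [hS, hSα, hSC, hW]
  have key1 : (f k - f (k-1)) / ((C k : ℚ) / (T k : ℚ))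
      = ((T k : ℚ) * (ux k : ℚ) - (α k : ℚ) - f k) / (1 - (W + S)) := by
    rw [hfk, hfk1, hW]
    field_simp
    ring
  have key2 : (f k - f (k-1)) / ((C k : ℚ) / (T k : ℚ))
      = ((T k : ℚ) * (ux k : ℚ) - (α k : ℚ) - f (k-1)) / (1 - S) := by
    rw [hfk, hfk1, hW]
    field_simp
    ring
  have hd1 : f k - f (k-1) = (W / (1 - (W + S))) * ((T k : ℚ) * (ux k : ℚ) - (α k : ℚ) - f k) := by
    have h := key1
    rw [hW, div_eq_div_iff (ne_of_gt hWpos) (ne_of_gt hq')] at h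
    field_simp
    linarith
  have hd2 : f k - f (k-1) = (W / (1 - S)) * ((T k : ℚ) * (ux k : ℚ) - (α k : ℚ) - f (k-1)) := by
    have h := key2
    rw [hW, div_eq_div_iff (ne_of_gt hWpos) (ne_of_gt hqk)] at h
    field_simp
    linarith
  refine ⟨⟨by rw [hqS]; exact key1, by rw [hS]; exact key2⟩, ?_, ?_⟩
  · rw [hd1, sign_mul, sign_pos (div_pos hWpos hq'), one_mul]
  · rw [hd2, sign_mul, sign_pos (div_pos hWpos hqk), one_mul]
end

section
/- In the kernel setting with ux ∈ ℤⁿ, assume the sortedness condition T_1·ux_1 − α_1 ≥ T_2·ux_2 − α_2 ≥ … ≥ T_n·ux_n − α_n. Let i satisfy 1 ≤ i ≤ n−1 and suppose f(i−1) is well-defined (i.e., 1 − Σ_{j∈[n]∖[i−1]} U_j > 0). If i is a local minimum point of f, i.e., f(i) ≤ f(i−1) and f(i) ≤ f(i+1), then f(i−1) = f(i) = f(i+1). -/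
/-- Kernel setting, sorted so that `T_j·ux_j − α_j` is nonincreasing: if `i` is
a local minimum point of `f` in the interior of its domain, then
`f(i−1) = f(i) = f(i+1)`. -/
theorem stmt_10 (n : ℕ) (C T α ux : ℕ → ℤ) (β : ℤ)
    (hC : ∀ i ∈ Finset.Icc 1 n, 0 < C i)
    (hT : ∀ i ∈ Finset.Icc 1 n, 0 < T i)
    (hU : ∑ j ∈ Finset.Icc 1 n, (C j : ℚ) / (T j : ℚ) ≤ 1)
    (sorted : ∀ i j : ℕ, 1 ≤ i → i ≤ j → j ≤ n →
      T j * ux j - α j ≤ T i * ux i - α i)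
    (f : ℕ → ℚ)
    (hf : ∀ m : ℕ, f m =
      ((β : ℚ) + ∑ j ∈ Finset.Icc (m + 1) n, (C j : ℚ) / (T j : ℚ) * (α j : ℚ) +
        ∑ j ∈ Finset.Icc 1 m, (C j : ℚ) * (ux j : ℚ)) /
      (1 - ∑ j ∈ Finset.Icc (m + 1) n, (C j : ℚ) / (T j : ℚ)))
    (i : ℕ) (hi1 : 1 ≤ i) (hin : i ≤ n - 1)
    (hwd : 0 < 1 - ∑ j ∈ Finset.Icc i n, (C j : ℚ) / (T j : ℚ))
    (hlocmin1 : f i ≤ f (i - 1)) (hlocmin2 : f i ≤ f (i + 1)) :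
    f (i - 1) = f i ∧ f i = f (i + 1) := by
  have hi_n : i ≤ n := by omega
  have hi1_n : i + 1 ≤ n := by omega
  have hmemi : i ∈ Finset.Icc 1 n := by simp only [Finset.mem_Icc]; omega
  have hmemi1 : i + 1 ∈ Finset.Icc 1 n := by simp only [Finset.mem_Icc]; omega
  have hTi : (0:ℚ) < (T i : ℚ) := by exact_mod_cast hT i hmemi
  have hTi1 : (0:ℚ) < (T (i+1) : ℚ) := by exact_mod_cast hT (i+1) hmemi1
  have hCi : (0:ℚ) < (C i : ℚ) := by exact_mod_cast hC i hmemi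
  have hCi1 : (0:ℚ) < (C (i+1) : ℚ) := by exact_mod_cast hC (i+1) hmemi1
  have hUi : 0 < (C i : ℚ) / (T i : ℚ) := div_pos hCi hTi
  have hUi1 : 0 < (C (i+1) : ℚ) / (T (i+1) : ℚ) := div_pos hCi1 hTi1
  have split : ∀ (g : ℕ → ℚ) (m : ℕ), m ≤ n →
      ∑ j ∈ Finset.Icc m n, g j = g m + ∑ j ∈ Finset.Icc (m+1) n, g j := by
    intro g m hm
    rw [Finset.Icc_add_one_left_eq_Ioc, Finset.Icc_eq_cons_Ioc hm, Finset.sum_cons]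
  have e : i - 1 + 1 = i := by omega
  have hfm1 := hf (i-1)
  rw [e] at hfm1
  have hfi := hf i
  have hfi1 := hf (i+1)
  have sU1 := split (fun j => (C j:ℚ)/(T j:ℚ)) i hi_n
  have sU2 := split (fun j => (C j:ℚ)/(T j:ℚ)) (i+1) hi1_n
  have sA1 := split (fun j => (C j:ℚ)/(T j:ℚ)*(α j:ℚ)) i hi_n
  have sA2 := split (fun j => (C j:ℚ)/(T j:ℚ)*(α j:ℚ)) (i+1) hi1_n
  have sB1 : ∑ j ∈ Finset.Icc 1 i, (C j:ℚ)*(ux j:ℚ)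
      = ∑ j ∈ Finset.Icc 1 (i-1), (C j:ℚ)*(ux j:ℚ) + (C i:ℚ)*(ux i:ℚ) := by
    have h := Finset.sum_Icc_succ_top (a := 1) (b := i-1) (by omega) (fun j => (C j:ℚ)*(ux j:ℚ))
    rwa [e] at h
  have sB2 := Finset.sum_Icc_succ_top (a := 1) (b := i) (by omega) (fun j => (C j:ℚ)*(ux j:ℚ))
  rw [sA1, sU1] at hfm1
  rw [sB1] at hfi
  rw [sA2, sU2] at hfm1 hfi
  rw [sB2, sB1] at hfi1
  rw [sU1, sU2] at hwd
  set Ui := (C i : ℚ) / (T i : ℚ) with hUidef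
  set Ui1 := (C (i+1) : ℚ) / (T (i+1) : ℚ) with hUi1def
  set S := ∑ j ∈ Finset.Icc (i+1+1) n, (C j:ℚ)/(T j:ℚ) with hSdef
  set A := ∑ j ∈ Finset.Icc (i+1+1) n, (C j:ℚ)/(T j:ℚ)*(α j:ℚ) with hAdef
  set B := ∑ j ∈ Finset.Icc 1 (i-1), (C j:ℚ)*(ux j:ℚ) with hBdef
  set a1 := (α i : ℚ) with ha1
  set a2 := (α (i+1) : ℚ) with ha2
  set g1 := (T i:ℚ)*(ux i:ℚ) - a1 with hg1
  set g2 := (T (i+1):ℚ)*(ux (i+1):ℚ) - a2 with hg2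
  have hc1 : (C i:ℚ)*(ux i:ℚ) = Ui*(g1+a1) := by
    rw [hg1, hUidef]; field_simp; ring
  have hc2 : (C (i+1):ℚ)*(ux (i+1):ℚ) = Ui1*(g2+a2) := by
    rw [hg2, hUi1def]; field_simp; ring
  have hsort : g2 ≤ g1 := by
    have h := sorted i (i+1) hi1 (Nat.le_succ i) hi1_n
    simp only [hg1, hg2, ha1, ha2]
    exact_mod_cast h
  rw [hc1] at hfi hfi1
  rw [hc2] at hfi1
  have hd : 0 < 1 - (Ui + (Ui1 + S)) := hwd
  have hd2 : 0 < 1 - (Ui1 + S) := by linarith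
  have hd3 : 0 < 1 - S := by linarith
  clear_value g2 g1 a2 a1 B A S Ui1 Ui
  rw [hfm1, hfi, div_le_div_iff₀ hd2 hd] at hlocmin1
  rw [hfi, hfi1, div_le_div_iff₀ hd2 hd3] at hlocmin2
  have h1 : 0 ≤ Ui * ((↑β + (Ui*a1 + (Ui1*a2 + A)) + B) - g1 * (1 - (Ui + (Ui1 + S)))) := by
    have hr : (↑β + (Ui * a1 + (Ui1 * a2 + A)) + B) * (1 - (Ui1 + S))
        - (↑β + (Ui1 * a2 + A) + (B + Ui * (g1 + a1))) * (1 - (Ui + (Ui1 + S)))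
        = Ui * ((↑β + (Ui*a1 + (Ui1*a2 + A)) + B) - g1 * (1 - (Ui + (Ui1 + S)))) := by ring
    linarith [sub_nonneg.mpr hlocmin1, hr.symm.le, hr.le]
  have k1' : g1 * (1 - (Ui + (Ui1 + S))) ≤ (β:ℚ) + (Ui*a1 + (Ui1*a2 + A)) + B := by
    have h0 : Ui * 0 ≤ Ui * ((↑β + (Ui*a1 + (Ui1*a2 + A)) + B) - g1 * (1 - (Ui + (Ui1 + S)))) := by
      simpa using h1
    have := le_of_mul_le_mul_left h0 hUi
    linarith
  have h2 : 0 ≤ Ui1 * (g2 * (1 - (Ui1 + S)) - ((β:ℚ) + (Ui1*a2 + A) + (B + Ui*(g1+a1)))) := by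
    have hr : (↑β + A + (B + Ui * (g1 + a1) + Ui1 * (g2 + a2))) * (1 - (Ui1 + S))
        - (↑β + (Ui1 * a2 + A) + (B + Ui * (g1 + a1))) * (1 - S)
        = Ui1 * (g2 * (1 - (Ui1 + S)) - ((β:ℚ) + (Ui1*a2 + A) + (B + Ui*(g1+a1)))) := by ring
    linarith [sub_nonneg.mpr hlocmin2, hr.symm.le, hr.le]
  have k2' : (β:ℚ) + (Ui1*a2 + A) + (B + Ui*(g1+a1)) ≤ g2 * (1 - (Ui1 + S)) := by
    have h0 : Ui1 * 0 ≤ Ui1 * (g2 * (1 - (Ui1 + S)) - ((β:ℚ) + (Ui1*a2 + A) + (B + Ui*(g1+a1)))) := by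
      simpa using h2
    have := le_of_mul_le_mul_left h0 hUi1
    linarith
  have hm := mul_le_mul_of_nonneg_right hsort hd2.le
  have hr3 : (β:ℚ) + (Ui1*a2 + A) + (B + Ui*(g1+a1))
      = ((β:ℚ) + (Ui*a1 + (Ui1*a2 + A)) + B) + Ui*g1 := by ring
  have hr4 : g1 * (1 - (Ui1 + S)) = g1 * (1 - (Ui + (Ui1 + S))) + Ui*g1 := by ring
  have hNeq : (β:ℚ) + (Ui*a1 + (Ui1*a2 + A)) + B = g1 * (1 - (Ui + (Ui1 + S))) :=
    le_antisymm (by linarith [k2', hm, hr3, hr4]) k1'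
  have hmul : g1 * (1 - (Ui1 + S)) ≤ g2 * (1 - (Ui1 + S)) := by
    linarith [k2', hNeq, hr3, hr4]
  have hgeq : g2 = g1 := le_antisymm hsort (le_of_mul_le_mul_right hmul hd2)
  constructor
  · rw [hfm1, hfi, div_eq_div_iff hd.ne' hd2.ne']
    linear_combination Ui * hNeq
  · rw [hfi, hfi1, div_eq_div_iff hd2.ne' hd3.ne']
    linear_combination Ui1 * hNeq - Ui1 * (1 - (Ui1 + S)) * hgeq
end

section
/- In the kernel setting with ux ∈ ℤⁿ, assume the sortedness condition T_1·ux_1 − α_1 ≥ T_2·ux_2 − α_2 ≥ … ≥ T_n·ux_n − α_n, and let D ⊆ {0,1,…,n} be the set of indices at which f is well-defined (D is either {0,…,n} or {1,…,n}). Call i ∈ D a local maximum point of f if f(i) ≥ f(i−1) whenever i−1 ∈ D and f(i) ≥ f(i+1) whenever i+1 ∈ D. If i₁ ≤ i₂ are two local maximum points of f in D, then f(i) = f(i₁) for every i ∈ D with i₁ < i ≤ i₂; in particular, every local maximum point of f is a global maximum point of f over D. -/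
private lemma aux_step (a u N w : ℚ) (ha : 0 < a) (hu : 0 < u) :
    (N / a ≤ (N + u * w) / (a + u) ↔ N / a ≤ w) ∧
    (N / a ≤ (N + u * w) / (a + u) ↔ (N + u * w) / (a + u) ≤ w) ∧
    ((N + u * w) / (a + u) ≤ N / a ↔ w ≤ N / a) ∧
    ((N + u * w) / (a + u) ≤ N / a ↔ w ≤ (N + u * w) / (a + u)) := by
  have hb : 0 < a + u := by linarith
  rw [div_le_div_iff₀ ha hb, div_le_div_iff₀ hb ha, div_le_iff₀ ha, le_div_iff₀ ha,
      div_le_iff₀ hb, le_div_iff₀ hb]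
  refine ⟨⟨fun h => ?_, fun h => ?_⟩, ⟨fun h => ?_, fun h => ?_⟩,
    ⟨fun h => ?_, fun h => ?_⟩, ⟨fun h => ?_, fun h => ?_⟩⟩ <;> nlinarith

/-- Kernel setting, sorted so that `T_j·ux_j − α_j` is nonincreasing, with `D`
the set of indices where `f` is well-defined: between two local maximum points
`i₁ ≤ i₂` of `f` the function is constant (`f i = f i₁` for `i₁ < i ≤ i₂` in
`D`); in particular every local maximum point of `f` is a global maximum point
of `f` over `D`. -/
theorem stmt_11 (n : ℕ) (C T α ux : ℕ → ℤ) (β : ℤ)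
    (hC : ∀ i ∈ Finset.Icc 1 n, 0 < C i)
    (hT : ∀ i ∈ Finset.Icc 1 n, 0 < T i)
    (hU : ∑ j ∈ Finset.Icc 1 n, (C j : ℚ) / (T j : ℚ) ≤ 1)
    (sorted : ∀ i j : ℕ, 1 ≤ i → i ≤ j → j ≤ n →
      T j * ux j - α j ≤ T i * ux i - α i)
    (f : ℕ → ℚ)
    (hf : ∀ m : ℕ, f m =
      ((β : ℚ) + ∑ j ∈ Finset.Icc (m + 1) n, (C j : ℚ) / (T j : ℚ) * (α j : ℚ) +
        ∑ j ∈ Finset.Icc 1 m, (C j : ℚ) * (ux j : ℚ)) /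
      (1 - ∑ j ∈ Finset.Icc (m + 1) n, (C j : ℚ) / (T j : ℚ)))
    (D : Set ℕ)
    (hD : D = {k : ℕ | k ≤ n ∧ 0 < 1 - ∑ j ∈ Finset.Icc (k + 1) n, (C j : ℚ) / (T j : ℚ)})
    (isLocMax : ℕ → Prop)
    (hLM : ∀ i : ℕ, isLocMax i ↔ i ∈ D ∧
      (1 ≤ i → i - 1 ∈ D → f (i - 1) ≤ f i) ∧ (i + 1 ∈ D → f (i + 1) ≤ f i))
    (i₁ i₂ : ℕ) (h12 : i₁ ≤ i₂) (h1 : isLocMax i₁) (h2 : isLocMax i₂) :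
    (∀ i ∈ D, i₁ < i → i ≤ i₂ → f i = f i₁) ∧
    (∀ i : ℕ, isLocMax i → ∀ j ∈ D, f j ≤ f i) := by
  have hDmem : ∀ k : ℕ, k ∈ D ↔ k ≤ n ∧
      0 < 1 - ∑ j ∈ Finset.Icc (k+1) n, (C j : ℚ) / (T j : ℚ) := by
    intro k; rw [hD]; exact Iff.rfl
  have peel : ∀ (F : ℕ → ℚ) (k : ℕ), k < n →
      ∑ j ∈ Finset.Icc (k+1) n, F j = F (k+1) + ∑ j ∈ Finset.Icc (k+1+1) n, F j := by
    intro F k hk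
    rw [show Finset.Icc (k+1) n = insert (k+1) (Finset.Icc (k+1+1) n) by
      ext x; simp only [Finset.mem_Icc, Finset.mem_insert]; omega]
    rw [Finset.sum_insert (by simp only [Finset.mem_Icc]; omega)]
  have top : ∀ (F : ℕ → ℚ) (k : ℕ),
      ∑ j ∈ Finset.Icc 1 (k+1), F j = ∑ j ∈ Finset.Icc 1 k, F j + F (k+1) := by
    intro F k; exact Finset.sum_Icc_succ_top (by omega) F
  set W : ℕ → ℚ := fun j => ((T j * ux j - α j : ℤ) : ℚ) with hW_def
  have hWmono : ∀ i j : ℕ, 1 ≤ i → i ≤ j → j ≤ n → W j ≤ W i := by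
    intro i j hi hij hjn
    simp only [hW_def]
    exact_mod_cast sorted i j hi hij hjn
  have hUpos : ∀ j : ℕ, 1 ≤ j → j ≤ n → 0 < (C j : ℚ) / (T j : ℚ) := by
    intro j hj1 hj2
    apply div_pos
    · exact_mod_cast hC j (Finset.mem_Icc.mpr ⟨hj1, hj2⟩)
    · exact_mod_cast hT j (Finset.mem_Icc.mpr ⟨hj1, hj2⟩)
  have hSstep : ∀ k : ℕ, k < n →
      (1 - ∑ j ∈ Finset.Icc (k+1) n, (C j : ℚ)/(T j : ℚ))
        + (C (k+1) : ℚ)/(T (k+1) : ℚ)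
      = 1 - ∑ j ∈ Finset.Icc (k+1+1) n, (C j : ℚ)/(T j : ℚ) := by
    intro k hk; rw [peel (fun j => (C j : ℚ)/(T j : ℚ)) k hk]; ring
  have hDup : ∀ k, k ∈ D → ∀ m, k ≤ m → m ≤ n → m ∈ D := by
    intro k hk m hkm hmn
    induction m, hkm using Nat.le_induction with
    | base => exact hk
    | succ m hkm ih =>
      have hm := ih (by omega)
      rw [hDmem] at hm ⊢
      refine ⟨hmn, ?_⟩
      have hs := hSstep m (by omega)
      have hu := hUpos (m+1) (by omega) hmn
      linarith [hm.2]
  have key : ∀ k : ℕ, k < n →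
      0 < 1 - ∑ j ∈ Finset.Icc (k+1) n, (C j : ℚ)/(T j : ℚ) →
      ((f k ≤ f (k+1) ↔ f k ≤ W (k+1)) ∧
       (f k ≤ f (k+1) ↔ f (k+1) ≤ W (k+1)) ∧
       (f (k+1) ≤ f k ↔ W (k+1) ≤ f k) ∧
       (f (k+1) ≤ f k ↔ W (k+1) ≤ f (k+1))) := by
    intro k hk ha
    have hT1 : (0:ℚ) < (T (k+1) : ℚ) := by
      exact_mod_cast hT (k+1) (Finset.mem_Icc.mpr ⟨by omega, by omega⟩)
    have hu : 0 < (C (k+1) : ℚ)/(T (k+1) : ℚ) := hUpos (k+1) (by omega) (by omega)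
    set a : ℚ := 1 - ∑ j ∈ Finset.Icc (k+1) n, (C j : ℚ)/(T j : ℚ) with ha_def
    set u : ℚ := (C (k+1) : ℚ)/(T (k+1) : ℚ) with hu_def
    set N : ℚ := (β:ℚ) + ∑ j ∈ Finset.Icc (k+1) n, (C j : ℚ)/(T j : ℚ) * (α j : ℚ)
        + ∑ j ∈ Finset.Icc 1 k, (C j : ℚ) * (ux j : ℚ) with hN_def
    have hfk : f k = N / a := by rw [hf k, hN_def, ha_def]
    have h1 : ∑ j ∈ Finset.Icc (k+1) n, (C j : ℚ)/(T j : ℚ) * (α j : ℚ)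
        = (C (k+1) : ℚ)/(T (k+1) : ℚ) * (α (k+1) : ℚ)
          + ∑ j ∈ Finset.Icc (k+1+1) n, (C j : ℚ)/(T j : ℚ) * (α j : ℚ) :=
      peel _ k hk
    have h2 : ∑ j ∈ Finset.Icc (k+1) n, (C j : ℚ)/(T j : ℚ)
        = (C (k+1) : ℚ)/(T (k+1) : ℚ)
          + ∑ j ∈ Finset.Icc (k+1+1) n, (C j : ℚ)/(T j : ℚ) :=
      peel _ k hk
    have h3 : ∑ j ∈ Finset.Icc 1 (k+1), (C j : ℚ) * (ux j : ℚ)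
        = ∑ j ∈ Finset.Icc 1 k, (C j : ℚ) * (ux j : ℚ)
          + (C (k+1) : ℚ) * (ux (k+1) : ℚ) :=
      top _ k
    have hW1 : W (k+1) = (T (k+1) : ℚ) * (ux (k+1) : ℚ) - (α (k+1) : ℚ) := by
      simp only [hW_def]; push_cast; ring
    have huW : u * W (k+1)
        = (C (k+1) : ℚ) * (ux (k+1) : ℚ) - u * (α (k+1) : ℚ) := by
      rw [hW1, hu_def]; field_simp
    have hfk1 : f (k+1) = (N + u * W (k+1)) / (a + u) := by
      rw [hf (k+1), h3, huW, hN_def, ha_def, h1, h2]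
      ring
    rw [hfk, hfk1]
    exact aux_step a u N (W (k+1)) ha hu
  -- monotone decreasing to the right of a local max
  have rightstep : ∀ i, isLocMax i → ∀ j, i ≤ j → j + 1 ≤ n → f (j+1) ≤ f j := by
    intro i hi j hij
    induction j, hij using Nat.le_induction with
    | base =>
      intro h
      obtain ⟨hiD, -, h3⟩ := (hLM i).1 hi
      exact h3 (hDup i hiD (i+1) (by omega) h)
    | succ j hij ih =>
      intro h
      have hdec : f (j+1) ≤ f j := ih (by omega)
      obtain ⟨hiD, -, -⟩ := (hLM i).1 hi
      have hjD : j ∈ D := hDup i hiD j hij (by omega)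
      have hj1D : j+1 ∈ D := hDup i hiD (j+1) (by omega) (by omega)
      have hposj := ((hDmem j).1 hjD).2
      have hposj1 := ((hDmem (j+1)).1 hj1D).2
      have hw1 : W (j+1) ≤ f (j+1) := ((key j (by omega) hposj).2.2.2).1 hdec
      have hw2 : W (j+1+1) ≤ W (j+1) := hWmono (j+1) (j+1+1) (by omega) (by omega) (by omega)
      exact ((key (j+1) (by omega) hposj1).2.2.1).2 (le_trans hw2 hw1)
  -- monotone increasing to the left of a local max
  have leftstep : ∀ i, isLocMax i → ∀ d j, j ∈ D → j + d + 1 = i → f j ≤ f (j+1) := by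
    intro i hi d
    induction d with
    | zero =>
      intro j hjD hji
      obtain ⟨hiD, h2', -⟩ := (hLM i).1 hi
      have hij : i = j + 1 := by omega
      subst hij
      simpa using h2' (by omega) (by simpa using hjD)
    | succ d ih =>
      intro j hjD hji
      obtain ⟨hiD, -, -⟩ := (hLM i).1 hi
      have hin : i ≤ n := ((hDmem i).1 hiD).1
      have hj1D : j+1 ∈ D := hDup j hjD (j+1) (by omega) (by omega)
      have hmono : f (j+1) ≤ f (j+1+1) := ih (j+1) hj1D (by omega)
      have hposj1 := ((hDmem (j+1)).1 hj1D).2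
      have hw1 : f (j+1) ≤ W (j+1+1) := ((key (j+1) (by omega) hposj1).1).1 hmono
      have hw2 : W (j+1+1) ≤ W (j+1) := hWmono (j+1) (j+1+1) (by omega) (by omega) (by omega)
      have hposj := ((hDmem j).1 hjD).2
      exact ((key j (by omega) hposj).2.1).2 (le_trans hw1 hw2)
  have chainUp : ∀ i, isLocMax i → ∀ j k, j ∈ D → j ≤ k → k ≤ i → f j ≤ f k := by
    intro i hi j k hjD hjk
    induction k, hjk using Nat.le_induction with
    | base => intro _; exact le_refl _
    | succ k hjk ih =>
      intro hk
      have hiD := ((hLM i).1 hi).1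
      have hin : i ≤ n := ((hDmem i).1 hiD).1
      have hkD : k ∈ D := hDup j hjD k hjk (by omega)
      exact le_trans (ih (by omega)) (leftstep i hi (i - k - 1) k hkD (by omega))
  have rightLe : ∀ i, isLocMax i → ∀ j, i ≤ j → j ≤ n → f j ≤ f i := by
    intro i hi j hij
    induction j, hij using Nat.le_induction with
    | base => intro _; exact le_refl _
    | succ j hij ih =>
      intro hj
      exact le_trans (rightstep i hi j hij hj) (ih (by omega))
  have hi1D := ((hLM i₁).1 h1).1
  constructor
  · intro i hiD hlt hle
    have hin : i ≤ n := ((hDmem i).1 hiD).1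
    exact le_antisymm (rightLe i₁ h1 i (by omega) hin)
      (chainUp i₂ h2 i₁ i hi1D (by omega) hle)
  · intro i hi j hjD
    have hiD := ((hLM i).1 hi).1
    have hin : i ≤ n := ((hDmem i).1 hiD).1
    have hjn : j ≤ n := ((hDmem j).1 hjD).1
    rcases le_total j i with h | h
    · exact chainUp i hi j i hjD h (le_refl i)
    · exact rightLe i hi j h hjn
end

section
/- In the kernel setting with n ≥ 1 and ux ∈ ℤⁿ, assume the sortedness condition T_1·ux_1 − α_1 ≥ T_2·ux_2 − α_2 ≥ … ≥ T_n·ux_n − α_n, and assume it is not the case that both Σ_{j∈[n]} U_j = 1 and β + Σ_{j∈[n]} U_j·α_j > 0. Then the feasible set LP-relax(ux) = {(t,x) ∈ ℝ × ℝⁿ : t − Σ_{j∈[n]} C_j·x_j ≥ β, T_i·x_i − t ≥ α_i for all i ∈ [n], x_i ≥ ux_i for all i ∈ [n]} is nonempty, the infimum of t over LP-relax(ux) is attained, and this minimum equals max{f(k) : k ∈ {0,…,n} such that f(k) is well-defined}. -/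
open Finset in
private lemma splitIcc' {M : Type*} [AddCommMonoid M] (g : ℕ → M) {a b c : ℕ}
    (hab : a ≤ b) (hbc : b ≤ c) :
    ∑ j ∈ Finset.Icc (a+1) c, g j
      = ∑ j ∈ Finset.Icc (a+1) b, g j + ∑ j ∈ Finset.Icc (b+1) c, g j := by
  rw [show a + 1 = a.succ from rfl, show b + 1 = b.succ from rfl,
    Nat.succ_eq_add_one, Nat.succ_eq_add_one,
    Finset.Icc_add_one_left_eq_Ioc, Finset.Icc_add_one_left_eq_Ioc, Finset.Icc_add_one_left_eq_Ioc]
  exact (Finset.sum_Ioc_consecutive g hab hbc).symm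

/-- Kernel setting, sorted so that `T_j·ux_j − α_j` is nonincreasing, and not
both `Σ U_j = 1` and `β + Σ U_j α_j > 0`: the feasible set of the relaxation
LP-relax(ux) is nonempty, the infimum of `t` over it is attained, and the
minimum equals `max {f(k) : f(k) well-defined}`. -/
theorem stmt_12 (n : ℕ) (hn : 1 ≤ n) (C T α ux : ℕ → ℤ) (β : ℤ)
    (hC : ∀ i ∈ Finset.Icc 1 n, 0 < C i)
    (hT : ∀ i ∈ Finset.Icc 1 n, 0 < T i)
    (hU : ∑ j ∈ Finset.Icc 1 n, (C j : ℚ) / (T j : ℚ) ≤ 1)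
    (sorted : ∀ i j : ℕ, 1 ≤ i → i ≤ j → j ≤ n →
      T j * ux j - α j ≤ T i * ux i - α i)
    (hnot : ¬ ((∑ j ∈ Finset.Icc 1 n, (C j : ℚ) / (T j : ℚ)) = 1 ∧
      (β : ℚ) + ∑ j ∈ Finset.Icc 1 n, (C j : ℚ) / (T j : ℚ) * (α j : ℚ) > 0))
    (f : ℕ → ℚ)
    (hf : ∀ m : ℕ, f m =
      ((β : ℚ) + ∑ j ∈ Finset.Icc (m + 1) n, (C j : ℚ) / (T j : ℚ) * (α j : ℚ) +
        ∑ j ∈ Finset.Icc 1 m, (C j : ℚ) * (ux j : ℚ)) /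
      (1 - ∑ j ∈ Finset.Icc (m + 1) n, (C j : ℚ) / (T j : ℚ)))
    (LP : Set (ℝ × (ℕ → ℝ)))
    (hLP : LP = {p : ℝ × (ℕ → ℝ) |
      p.1 - ∑ j ∈ Finset.Icc 1 n, (C j : ℝ) * p.2 j ≥ (β : ℝ) ∧
      (∀ i ∈ Finset.Icc 1 n, (T i : ℝ) * p.2 i - p.1 ≥ (α i : ℝ)) ∧
      (∀ i ∈ Finset.Icc 1 n, p.2 i ≥ (ux i : ℝ))}) :
    ∃ p ∈ LP, (∀ q ∈ LP, p.1 ≤ q.1) ∧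
      ∃ k : ℕ, k ≤ n ∧
        0 < 1 - ∑ j ∈ Finset.Icc (k + 1) n, (C j : ℚ) / (T j : ℚ) ∧
        p.1 = (f k : ℝ) ∧
        ∀ m : ℕ, m ≤ n →
          0 < 1 - ∑ j ∈ Finset.Icc (m + 1) n, (C j : ℚ) / (T j : ℚ) →
          f m ≤ f k := by
  classical
  -- abbreviations
  set U : ℕ → ℚ := fun j => (C j : ℚ) / (T j : ℚ) with hUdef
  set S : ℕ → ℚ := fun k => ∑ j ∈ Finset.Icc (k+1) n, U j with hSdef
  set N : ℕ → ℚ := fun k => (β:ℚ) + ∑ j ∈ Finset.Icc (k+1) n, U j * (α j:ℚ) +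
      ∑ j ∈ Finset.Icc 1 k, (C j:ℚ) * (ux j:ℚ) with hNdef
  have hfN : ∀ m, f m = N m / (1 - S m) := by
    intro m; rw [hf m]
  have hTpos : ∀ j, 1 ≤ j → j ≤ n → (0:ℚ) < (T j : ℚ) := by
    intro j h1 h2
    exact_mod_cast hT j (Finset.mem_Icc.mpr ⟨h1, h2⟩)
  have hCpos : ∀ j, 1 ≤ j → j ≤ n → (0:ℚ) < (C j : ℚ) := by
    intro j h1 h2
    exact_mod_cast hC j (Finset.mem_Icc.mpr ⟨h1, h2⟩)
  have hUpos : ∀ j, 1 ≤ j → j ≤ n → 0 < U j := by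
    intro j h1 h2
    exact div_pos (hCpos j h1 h2) (hTpos j h1 h2)
  have hSmono : ∀ k k', k ≤ k' → k' ≤ n → S k' ≤ S k := by
    intro k k' hkk hkn
    simp only [hSdef]
    rw [splitIcc' U hkk hkn]
    have : 0 ≤ ∑ j ∈ Finset.Icc (k+1) k', U j := by
      apply Finset.sum_nonneg
      intro j hj
      rw [Finset.mem_Icc] at hj
      exact (hUpos j (by omega) (by omega)).le
    linarith
  have hSsucc : ∀ m, m < n → S m = U (m+1) + S (m+1) := by
    intro m hm
    simp only [hSdef]
    rw [splitIcc' U (Nat.le_succ m) hm, Finset.Icc_self, Finset.sum_singleton]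
  have hS0 : S 0 ≤ 1 := hU
  have hSn : S n = 0 := by simp [hSdef]
  -- the multiplied form of f
  have hfmul : ∀ m, 1 - S m ≠ 0 → (1 - S m) * f m = N m := by
    intro m hm
    rw [hfN m]; field_simp
  clear_value U S N
  -- step identity
  have hNsucc : ∀ m, m < n →
      N (m+1) = N m + U (m+1) * ((T (m+1) : ℚ) * (ux (m+1) : ℚ) - (α (m+1) : ℚ)) := by
    intro m hm
    have hTne : (T (m+1) : ℚ) ≠ 0 := ne_of_gt (hTpos (m+1) (by omega) (by omega))
    have hUT : U (m+1) * (T (m+1) : ℚ) = (C (m+1) : ℚ) := by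
      simp only [hUdef]; field_simp
    simp only [hNdef]
    rw [Finset.sum_Icc_succ_top (by omega : 1 ≤ m + 1) (fun j => (C j:ℚ) * (ux j:ℚ)),
      splitIcc' (fun j => U j * (α j : ℚ)) (Nat.le_succ m) hm, Finset.Icc_self,
      Finset.sum_singleton]
    rw [← hUT]
    ring
  have hstep : ∀ m, m < n → 1 - S m ≠ 0 → 1 - S (m+1) ≠ 0 →
      (1 - S (m+1)) * f (m+1) - (1 - S m) * f m
        = U (m+1) * ((T (m+1) : ℚ) * (ux (m+1) : ℚ) - (α (m+1) : ℚ)) := by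
    intro m hm hD hD'
    rw [hfmul m hD, hfmul (m+1) hD', hNsucc m hm]
    ring
  -- the maximizer
  obtain ⟨k, hkK, hkmax⟩ := Finset.exists_max_image
    ((Finset.range (n+1)).filter (fun k => S k < 1)) f
    ⟨n, by simp [hSn]⟩
  rw [Finset.mem_filter, Finset.mem_range] at hkK
  have hkn : k ≤ n := by omega
  have hDk : 0 < 1 - S k := by linarith [hkK.2]
  -- upper bound : if k < n then bq (k+1) ≤ f k
  have hub : k < n → (T (k+1) : ℚ) * (ux (k+1) : ℚ) - (α (k+1) : ℚ) ≤ f k := by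
    intro hklt
    have hD' : 0 < 1 - S (k+1) := by
      have := hSmono k (k+1) (Nat.le_succ k) hklt
      linarith
    have hmem : k + 1 ∈ (Finset.range (n+1)).filter (fun k => S k < 1) := by
      rw [Finset.mem_filter, Finset.mem_range]
      exact ⟨by omega, by linarith⟩
    have hle : f (k+1) ≤ f k := hkmax (k+1) hmem
    have hid := hstep k hklt (ne_of_gt hDk) (ne_of_gt hD')
    have hU1 := hUpos (k+1) (by omega) (by omega)
    have hSs' : (1 - S (k+1)) * f k - (1 - S k) * f k = U (k+1) * f k := by
      linear_combination (f k) * hSsucc k hklt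
    have hle' := mul_le_mul_of_nonneg_left hle (le_of_lt hD')
    have h1 : U (k+1) * ((T (k+1) : ℚ) * (ux (k+1) : ℚ) - (α (k+1) : ℚ))
        ≤ U (k+1) * f k := by linarith [hid, hle', hSs']
    exact le_of_mul_le_mul_left h1 hU1
  -- lower bound : if 1 ≤ k then f k ≤ bq k
  have hlb : 1 ≤ k → f k ≤ (T k : ℚ) * (ux k : ℚ) - (α k : ℚ) := by
    intro h1k
    obtain ⟨m, rfl⟩ : ∃ m, k = m + 1 := ⟨k - 1, by omega⟩
    have hmn : m < n := by omega
    by_cases hD0 : 0 < 1 - S m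
    · have hmem : m ∈ (Finset.range (n+1)).filter (fun k => S k < 1) := by
        rw [Finset.mem_filter, Finset.mem_range]
        exact ⟨by omega, by linarith⟩
      have hle : f m ≤ f (m+1) := hkmax m hmem
      have hid := hstep m hmn (ne_of_gt hD0) (ne_of_gt hDk)
      have hU1 := hUpos (m+1) (by omega) (by omega)
      have hSs' : (1 - S (m+1)) * f (m+1) - (1 - S m) * f (m+1) = U (m+1) * f (m+1) := by
        linear_combination (f (m+1)) * hSsucc m hmn
      have hle' := mul_le_mul_of_nonneg_left hle (le_of_lt hD0)
      have h1 : U (m+1) * f (m+1)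
          ≤ U (m+1) * ((T (m+1) : ℚ) * (ux (m+1) : ℚ) - (α (m+1) : ℚ)) := by
        linarith [hid, hle', hSs']
      exact le_of_mul_le_mul_left h1 hU1
    · push_neg at hD0
      -- then S m = 1 and m = 0
      have hSm1 : S m ≤ S 0 := by
        rcases Nat.eq_zero_or_pos m with h | h
        · rw [h]
        · exact hSmono 0 m (Nat.zero_le m) (by omega)
      have hSmeq : S m = 1 := le_antisymm (le_trans hSm1 hS0) (by linarith)
      have hm0 : m = 0 := by
        by_contra hm0
        have h1m : 1 ≤ m := by omega
        have : S 0 = (∑ j ∈ Finset.Icc 1 m, U j) + S m := by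
          simp only [hSdef]
          exact splitIcc' U (Nat.zero_le m) (by omega)
        have hpos : 0 < ∑ j ∈ Finset.Icc 1 m, U j := by
          apply Finset.sum_pos
          · intro j hj
            rw [Finset.mem_Icc] at hj
            exact hUpos j hj.1 (by omega)
          · exact ⟨1, Finset.mem_Icc.mpr ⟨le_refl 1, h1m⟩⟩
        have : 1 < S 0 := by rw [this, hSmeq]; linarith
        linarith
      subst hm0
      have hS01 : S 0 = 1 := hSmeq
      have hN0 : N 0 ≤ 0 := by
        have : ¬ ((β : ℚ) + ∑ j ∈ Finset.Icc 1 n, (C j : ℚ) / (T j : ℚ) * (α j : ℚ) > 0) := by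
          intro hgt
          have hS01' : (Finset.Icc 1 n).sum U = 1 := by simpa [hSdef] using hS01
          exact hnot ⟨hS01', hgt⟩
        push_neg at this
        simp only [hNdef, hUdef]
        simpa using this
      have hD1 : 1 - S 1 = U 1 := by
        have := hSsucc 0 (by omega)
        rw [hS01] at this; linarith
      have hN1 : N 1 = N 0 + U 1 * ((T 1 : ℚ) * (ux 1 : ℚ) - (α 1 : ℚ)) := hNsucc 0 (by omega)
      have hU1 := hUpos 1 (le_refl 1) hn
      rw [hfN 1, hD1, div_le_iff₀ hU1]
      nlinarith [hN1, hN0]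
  -- the candidate point
  set xq : ℕ → ℚ := fun j => max ((ux j : ℚ)) ((f k + (α j : ℚ)) / (T j : ℚ)) with hxdef
  have hxlo : ∀ j, 1 ≤ j → j ≤ k → xq j = (ux j : ℚ) := by
    intro j h1 h2
    have hbk : f k ≤ (T k : ℚ) * (ux k : ℚ) - (α k : ℚ) := hlb (by omega)
    have hbj : (T k : ℚ) * (ux k : ℚ) - (α k : ℚ) ≤ (T j : ℚ) * (ux j : ℚ) - (α j : ℚ) := by
      exact_mod_cast sorted j k h1 h2 hkn
    have hTj := hTpos j h1 (by omega)
    simp only [hxdef]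
    apply max_eq_left
    rw [div_le_iff₀ hTj]
    nlinarith
  have hxhi : ∀ j, k + 1 ≤ j → j ≤ n → xq j = (f k + (α j : ℚ)) / (T j : ℚ) := by
    intro j h1 h2
    have hbk : (T (k+1) : ℚ) * (ux (k+1) : ℚ) - (α (k+1) : ℚ) ≤ f k := hub (by omega)
    have hbj : (T j : ℚ) * (ux j : ℚ) - (α j : ℚ)
        ≤ (T (k+1) : ℚ) * (ux (k+1) : ℚ) - (α (k+1) : ℚ) := by
      exact_mod_cast sorted (k+1) j (by omega) h1 h2
    have hTj := hTpos j (by omega) h2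
    simp only [hxdef]
    apply max_eq_right
    rw [le_div_iff₀ hTj]
    nlinarith
  have hxge : ∀ j, (ux j : ℚ) ≤ xq j := fun j => le_max_left _ _
  have hxT : ∀ j, 1 ≤ j → j ≤ n → f k + (α j : ℚ) ≤ (T j : ℚ) * xq j := by
    intro j h1 h2
    have hTj := hTpos j h1 h2
    have := le_max_right ((ux j : ℚ)) ((f k + (α j : ℚ)) / (T j : ℚ))
    rw [div_le_iff₀ hTj] at this
    simp only [hxdef]
    nlinarith [this]
  -- the feasibility equality
  have hsum : f k - ∑ j ∈ Finset.Icc 1 n, (C j : ℚ) * xq j = (β : ℚ) := by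
    have hsplit : ∑ j ∈ Finset.Icc 1 n, (C j : ℚ) * xq j
        = ∑ j ∈ Finset.Icc 1 k, (C j : ℚ) * xq j
          + ∑ j ∈ Finset.Icc (k+1) n, (C j : ℚ) * xq j :=
      splitIcc' (fun j => (C j : ℚ) * xq j) (Nat.zero_le k) hkn
    have h1 : ∑ j ∈ Finset.Icc 1 k, (C j : ℚ) * xq j
        = ∑ j ∈ Finset.Icc 1 k, (C j : ℚ) * (ux j : ℚ) := by
      apply Finset.sum_congr rfl
      intro j hj
      rw [Finset.mem_Icc] at hj
      rw [hxlo j hj.1 hj.2]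
    have h2 : ∑ j ∈ Finset.Icc (k+1) n, (C j : ℚ) * xq j
        = ∑ j ∈ Finset.Icc (k+1) n, (U j * f k + U j * (α j : ℚ)) := by
      apply Finset.sum_congr rfl
      intro j hj
      rw [Finset.mem_Icc] at hj
      rw [hxhi j hj.1 hj.2]
      have hTj : (T j : ℚ) ≠ 0 := ne_of_gt (hTpos j (by omega) hj.2)
      simp only [hUdef]
      field_simp
    have h3 : ∑ j ∈ Finset.Icc (k+1) n, (U j * f k + U j * (α j : ℚ))
        = S k * f k + ∑ j ∈ Finset.Icc (k+1) n, U j * (α j : ℚ) := by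
      rw [Finset.sum_add_distrib, ← Finset.sum_mul]
      simp only [hSdef]
    have hNk := hfmul k (ne_of_gt hDk)
    simp only [hNdef] at hNk
    rw [hsplit, h1, h2, h3]
    linarith [hNk]
  refine ⟨((f k : ℝ), fun j => ((xq j : ℚ) : ℝ)), ?_, ?_, k, hkn, ?_, rfl, ?_⟩
  · rw [hLP]
    refine ⟨?_, ?_, ?_⟩
    · have h := congrArg (fun q : ℚ => (q : ℝ)) hsum
      push_cast at h
      simp only [ge_iff_le]
      rw [← h]
    · intro i hi
      rw [Finset.mem_Icc] at hi
      have := hxT i hi.1 hi.2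
      have h := (Rat.cast_le (K := ℝ)).mpr this
      push_cast at h ⊢
      linarith
    · intro i hi
      have h := (Rat.cast_le (K := ℝ)).mpr (hxge i)
      push_cast at h ⊢
      linarith
  · -- optimality
    intro q hq
    rw [hLP] at hq
    obtain ⟨h1, h2, h3⟩ := hq
    have key : (β : ℝ) + (∑ j ∈ Finset.Icc 1 k, (C j : ℚ) * (ux j : ℚ) : ℚ)
        + ((S k : ℚ) : ℝ) * q.1
        + ((∑ j ∈ Finset.Icc (k+1) n, U j * (α j : ℚ) : ℚ) : ℝ) ≤ q.1 := by
      have hsplit : ∑ j ∈ Finset.Icc 1 n, (C j : ℝ) * q.2 j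
          = ∑ j ∈ Finset.Icc 1 k, (C j : ℝ) * q.2 j
            + ∑ j ∈ Finset.Icc (k+1) n, (C j : ℝ) * q.2 j :=
        splitIcc' (fun j => (C j : ℝ) * q.2 j) (Nat.zero_le k) hkn
      have hA : (((∑ j ∈ Finset.Icc 1 k, (C j : ℚ) * (ux j : ℚ)) : ℚ) : ℝ)
          ≤ ∑ j ∈ Finset.Icc 1 k, (C j : ℝ) * q.2 j := by
        push_cast
        apply Finset.sum_le_sum
        intro j hj
        rw [Finset.mem_Icc] at hj
        have hCj : (0:ℝ) ≤ (C j : ℝ) := by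
          exact_mod_cast (hCpos j hj.1 (by omega)).le
        exact mul_le_mul_of_nonneg_left (h3 j (Finset.mem_Icc.mpr ⟨hj.1, by omega⟩)) hCj
      have hB : ((S k : ℚ) : ℝ) * q.1
            + ((∑ j ∈ Finset.Icc (k+1) n, U j * (α j : ℚ) : ℚ) : ℝ)
          ≤ ∑ j ∈ Finset.Icc (k+1) n, (C j : ℝ) * q.2 j := by
        simp only [hSdef, hUdef]
        push_cast
        rw [Finset.sum_mul, ← Finset.sum_add_distrib]
        apply Finset.sum_le_sum
        intro j hj
        rw [Finset.mem_Icc] at hj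
        have hTj : (0:ℝ) < (T j : ℝ) := by exact_mod_cast hTpos j (by omega) hj.2
        have hCj : (0:ℝ) < (C j : ℝ) := by exact_mod_cast hCpos j (by omega) hj.2
        have hq2 : q.1 + (α j : ℝ) ≤ (T j : ℝ) * q.2 j := by
          have := h2 j (Finset.mem_Icc.mpr ⟨by omega, hj.2⟩)
          linarith
        have hUj : (0:ℝ) < (C j : ℝ) / (T j : ℝ) := div_pos hCj hTj
        have := mul_le_mul_of_nonneg_left hq2 hUj.le
        calc (C j : ℝ) / (T j : ℝ) * q.1 + (C j : ℝ) / (T j : ℝ) * (α j : ℝ)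
            = (C j : ℝ) / (T j : ℝ) * (q.1 + (α j : ℝ)) := by ring
          _ ≤ (C j : ℝ) / (T j : ℝ) * ((T j : ℝ) * q.2 j) := this
          _ = (C j : ℝ) * q.2 j := by field_simp
      rw [hsplit] at h1
      linarith
    have hNk := hfmul k (ne_of_gt hDk)
    have hcast : ((f k : ℚ) : ℝ) * ((1 - S k : ℚ) : ℝ) = ((N k : ℚ) : ℝ) := by
      rw [← Rat.cast_mul]
      exact congrArg _ (by linarith [hNk])
    have hDkR : (0:ℝ) < ((1 - S k : ℚ) : ℝ) := by exact_mod_cast hDk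
    have hq1 : ((N k : ℚ) : ℝ) ≤ q.1 * ((1 - S k : ℚ) : ℝ) := by
      simp only [hNdef]
      push_cast
      push_cast at key
      nlinarith [key]
    nlinarith [hcast, hq1, hDkR]
  · simpa [hSdef] using hDk
  · intro m hmn hDm
    apply hkmax m
    rw [Finset.mem_filter, Finset.mem_range]
    constructor
    · omega
    · simp only [hSdef]
      linarith [hDm]
end

section
/- In the kernel setting with n ≥ 1 and ux ∈ ℤⁿ, suppose Σ_{j∈[n]} U_j = 1 and β + Σ_{j∈[n]} U_j·α_j ≤ 0. Then the supremum of (β + Σ_{j∈[n]} U_j·α_j)·v + (T_1·ux_1 − α_1)·z over the set {(v,z) ∈ ℝ² : v ≥ 0, z ≥ 0, z = 1, U_1·v − z ≥ 0} is attained at (v,z) = (1/U_1, 1) and equals f(1) = (β + Σ_{j∈[n]∖[1]} U_j·α_j + C_1·ux_1)/U_1. -/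
/-- Kernel setting with `Σ U_j = 1` and `β + Σ U_j α_j ≤ 0`: the supremum of
the knapsack subproblem LP for index `k = 1` is attained at
`(v, z) = (1/U₁, 1)` and equals `f(1)`. -/
theorem stmt_13 (n : ℕ) (hn : 1 ≤ n) (C T α ux : ℕ → ℤ) (β : ℤ)
    (hC : ∀ i ∈ Finset.Icc 1 n, 0 < C i)
    (hT : ∀ i ∈ Finset.Icc 1 n, 0 < T i)
    (hU1 : ∑ j ∈ Finset.Icc 1 n, (C j : ℚ) / (T j : ℚ) = 1)
    (hβ : (β : ℚ) + ∑ j ∈ Finset.Icc 1 n, (C j : ℚ) / (T j : ℚ) * (α j : ℚ) ≤ 0)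
    (f : ℕ → ℚ)
    (hf : ∀ m : ℕ, f m =
      ((β : ℚ) + ∑ j ∈ Finset.Icc (m + 1) n, (C j : ℚ) / (T j : ℚ) * (α j : ℚ) +
        ∑ j ∈ Finset.Icc 1 m, (C j : ℚ) * (ux j : ℚ)) /
      (1 - ∑ j ∈ Finset.Icc (m + 1) n, (C j : ℚ) / (T j : ℚ)))
    (obj : ℝ → ℝ → ℝ)
    (hobj : ∀ v z : ℝ, obj v z =
      ((β : ℝ) + ∑ j ∈ Finset.Icc 1 n, (C j : ℝ) / (T j : ℝ) * (α j : ℝ)) * v +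
      ((T 1 : ℝ) * (ux 1 : ℝ) - (α 1 : ℝ)) * z) :
    IsGreatest {y : ℝ | ∃ v z : ℝ, 0 ≤ v ∧ 0 ≤ z ∧ z = 1 ∧
        (C 1 : ℝ) / (T 1 : ℝ) * v - z ≥ 0 ∧ y = obj v z}
      (obj (1 / ((C 1 : ℝ) / (T 1 : ℝ))) 1) ∧
    obj (1 / ((C 1 : ℝ) / (T 1 : ℝ))) 1 = (f 1 : ℝ) := by
  have h1mem : (1 : ℕ) ∈ Finset.Icc 1 n := Finset.mem_Icc.mpr ⟨le_refl 1, hn⟩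
  have hC1 : (0 : ℚ) < (C 1 : ℚ) := by exact_mod_cast hC 1 h1mem
  have hT1 : (0 : ℚ) < (T 1 : ℚ) := by exact_mod_cast hT 1 h1mem
  have hU1pos : (0 : ℚ) < (C 1 : ℚ) / (T 1 : ℚ) := div_pos hC1 hT1
  have hC1r : (0 : ℝ) < (C 1 : ℝ) := by exact_mod_cast hC 1 h1mem
  have hT1r : (0 : ℝ) < (T 1 : ℝ) := by exact_mod_cast hT 1 h1mem
  have hU1r : (0 : ℝ) < (C 1 : ℝ) / (T 1 : ℝ) := div_pos hC1r hT1r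
  -- split sums at 1
  have hsplit : ∀ g : ℕ → ℚ, ∑ j ∈ Finset.Icc 1 n, g j = g 1 + ∑ j ∈ Finset.Icc 2 n, g j := by
    intro g
    rw [Finset.Icc_eq_cons_Ioc hn, Finset.sum_cons]
    congr 1
  set Sq : ℚ := ∑ j ∈ Finset.Icc 1 n, (C j : ℚ) / (T j : ℚ) * (α j : ℚ) with hSq
  have hScast : (∑ j ∈ Finset.Icc 1 n, (C j : ℝ) / (T j : ℝ) * (α j : ℝ)) = ((Sq : ℚ) : ℝ) := by
    rw [hSq]; push_cast; rfl
  have hSle : ((β : ℚ) + Sq) ≤ 0 := hβ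
  have hSler : ((β : ℝ) + ((Sq : ℚ) : ℝ)) ≤ 0 := by exact_mod_cast hSle
  -- denominator of f 1
  have hden : 1 - ∑ j ∈ Finset.Icc 2 n, (C j : ℚ) / (T j : ℚ) = (C 1 : ℚ) / (T 1 : ℚ) := by
    have := hsplit (fun j => (C j : ℚ) / (T j : ℚ))
    rw [hU1] at this
    linarith
  -- value of f 1 in ℚ
  have hf1 : f 1 = ((β : ℚ) + Sq) / ((C 1 : ℚ) / (T 1 : ℚ)) + (T 1 : ℚ) * (ux 1 : ℚ) - (α 1 : ℚ) := by
    rw [hf 1]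
    have hα := hsplit (fun j => (C j : ℚ) / (T j : ℚ) * (α j : ℚ))
    simp only [Finset.Icc_self, Finset.sum_singleton]
    rw [show (1 + 1 : ℕ) = 2 from rfl, hden]
    rw [hSq, hα]
    field_simp
    ring
  constructor
  · constructor
    · refine ⟨1 / ((C 1 : ℝ) / (T 1 : ℝ)), 1, ?_, zero_le_one, rfl, ?_, rfl⟩
      · positivity
      · rw [mul_one_div, div_self (ne_of_gt hU1r)]
        linarith
    · rintro y ⟨v, z, hv, hz, hz1, hcon, hy⟩
      subst hz1
      rw [hy, hobj, hobj, hScast]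
      have hvge : 1 / ((C 1 : ℝ) / (T 1 : ℝ)) ≤ v := by
        rw [div_le_iff₀ hU1r] at *
        nlinarith
      nlinarith
  · rw [hobj, hScast, hf1]
    push_cast
    ring
end

section
/- In the kernel setting with ux ∈ ℤⁿ, let k ∈ [n] be such that f(k−1) is well-defined, i.e., q := 1 − Σ_{j∈[n]∖[k−1]} U_j > 0. Then the supremum of (β + Σ_{j∈[n]∖[k−1]} U_j·α_j + Σ_{j∈[k−1]} C_j·ux_j)·v + (T_k·ux_k − α_k)·z over the set {(v,z) ∈ ℝ² : v ≥ 0, z ≥ 0, q·v + z = 1, U_k·v − z ≥ 0} is attained and equals max{f(k−1), f(k)}. -/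
/-- Kernel setting with `q = 1 − Σ_{j∈[n]∖[k−1]} U_j > 0` (i.e. `f(k−1)` is
well-defined): the supremum of the knapsack subproblem LP for index `k` is
attained and equals `max (f(k−1)) (f(k))`. -/
theorem stmt_14 (n : ℕ) (C T α ux : ℕ → ℤ) (β : ℤ)
    (hC : ∀ i ∈ Finset.Icc 1 n, 0 < C i)
    (hT : ∀ i ∈ Finset.Icc 1 n, 0 < T i)
    (hU : ∑ j ∈ Finset.Icc 1 n, (C j : ℚ) / (T j : ℚ) ≤ 1)
    (f : ℕ → ℚ)
    (hf : ∀ m : ℕ, f m =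
      ((β : ℚ) + ∑ j ∈ Finset.Icc (m + 1) n, (C j : ℚ) / (T j : ℚ) * (α j : ℚ) +
        ∑ j ∈ Finset.Icc 1 m, (C j : ℚ) * (ux j : ℚ)) /
      (1 - ∑ j ∈ Finset.Icc (m + 1) n, (C j : ℚ) / (T j : ℚ)))
    (k : ℕ) (hk1 : 1 ≤ k) (hkn : k ≤ n)
    (q : ℚ) (hq : q = 1 - ∑ j ∈ Finset.Icc k n, (C j : ℚ) / (T j : ℚ))
    (hqpos : 0 < q) :
    IsGreatest {y : ℝ | ∃ v z : ℝ, 0 ≤ v ∧ 0 ≤ z ∧ (q : ℝ) * v + z = 1 ∧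
        (C k : ℝ) / (T k : ℝ) * v - z ≥ 0 ∧
        y = ((β : ℝ) + ∑ j ∈ Finset.Icc k n, (C j : ℝ) / (T j : ℝ) * (α j : ℝ) +
              ∑ j ∈ Finset.Icc 1 (k - 1), (C j : ℝ) * (ux j : ℝ)) * v +
            ((T k : ℝ) * (ux k : ℝ) - (α k : ℝ)) * z}
      ((max (f (k - 1)) (f k) : ℚ) : ℝ) := by
  have hkmem : k ∈ Finset.Icc 1 n := Finset.mem_Icc.mpr ⟨hk1, hkn⟩
  have hTk : (0:ℚ) < T k := by exact_mod_cast hT k hkmem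
  have hCk : (0:ℚ) < C k := by exact_mod_cast hC k hkmem
  set Uq : ℚ := (C k : ℚ) / (T k : ℚ) with hUq
  have hUqpos : 0 < Uq := by positivity
  set Aq : ℚ := (β : ℚ) + ∑ j ∈ Finset.Icc k n, (C j : ℚ) / (T j : ℚ) * (α j : ℚ) +
        ∑ j ∈ Finset.Icc 1 (k - 1), (C j : ℚ) * (ux j : ℚ) with hAq
  set Dq : ℚ := (T k : ℚ) * (ux k : ℚ) - (α k : ℚ) with hDq
  have hk1' : k - 1 + 1 = k := Nat.sub_add_cancel hk1
  have hfk1 : f (k-1) = Aq / q := by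
    rw [hf (k-1), hk1', hq]
  have hsplit1 : Finset.Icc k n = insert k (Finset.Icc (k+1) n) := by
    ext x; simp only [Finset.mem_Icc, Finset.mem_insert]; omega
  have hsplit2 : Finset.Icc 1 k = insert k (Finset.Icc 1 (k-1)) := by
    ext x; simp only [Finset.mem_Icc, Finset.mem_insert]; omega
  have hnotmem1 : k ∉ Finset.Icc (k+1) n := by simp
  have hnotmem2 : k ∉ Finset.Icc 1 (k-1) := by
    simp only [Finset.mem_Icc]; omega
  have hfk : f k = (Aq + Dq * Uq) / (q + Uq) := by
    rw [hf k]
    have e1 : ∑ j ∈ Finset.Icc k n, (C j : ℚ) / (T j : ℚ) * (α j : ℚ)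
        = Uq * α k + ∑ j ∈ Finset.Icc (k+1) n, (C j : ℚ) / (T j : ℚ) * (α j : ℚ) := by
      rw [hsplit1, Finset.sum_insert hnotmem1]
    have e2 : (∑ j ∈ Finset.Icc k n, (C j : ℚ) / (T j : ℚ))
        = Uq + ∑ j ∈ Finset.Icc (k+1) n, (C j : ℚ) / (T j : ℚ) := by
      rw [hsplit1, Finset.sum_insert hnotmem1]
    have e3 : ∑ j ∈ Finset.Icc 1 k, (C j : ℚ) * (ux j : ℚ)
        = (C k : ℚ) * ux k + ∑ j ∈ Finset.Icc 1 (k-1), (C j : ℚ) * (ux j : ℚ) := by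
      rw [hsplit2, Finset.sum_insert hnotmem2]
    have hTne : (T k : ℚ) ≠ 0 := ne_of_gt hTk
    rw [hAq, hDq, hq, e1, e2, e3, hUq]
    have hd : 1 - (((C k : ℚ)/(T k : ℚ)) + ∑ j ∈ Finset.Icc (k+1) n, (C j : ℚ) / (T j : ℚ))
        + (C k : ℚ)/(T k : ℚ) = 1 - ∑ j ∈ Finset.Icc (k+1) n, (C j : ℚ) / (T j : ℚ) := by ring
    rw [hd]
    congr 1
    field_simp
    ring
  -- real versions
  have hQR : (0:ℝ) < (q:ℝ) := by exact_mod_cast hqpos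
  have hUR : (0:ℝ) < (Uq:ℝ) := by exact_mod_cast hUqpos
  have hQUR : (0:ℝ) < (q:ℝ) + (Uq:ℝ) := by linarith
  have hA : ((Aq:ℚ):ℝ) = (β : ℝ) + ∑ j ∈ Finset.Icc k n, (C j : ℝ) / (T j : ℝ) * (α j : ℝ) +
        ∑ j ∈ Finset.Icc 1 (k - 1), (C j : ℝ) * (ux j : ℝ) := by
    rw [hAq]; push_cast; ring
  have hD : ((Dq:ℚ):ℝ) = (T k : ℝ) * (ux k : ℝ) - (α k : ℝ) := by
    rw [hDq]; push_cast; ring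
  have hUcast : ((Uq:ℚ):ℝ) = (C k : ℝ) / (T k : ℝ) := by
    rw [hUq]; push_cast; ring
  set M : ℝ := ((max (f (k - 1)) (f k) : ℚ) : ℝ) with hM
  have hMle1 : ((f (k-1) : ℚ) : ℝ) ≤ M := by
    rw [hM]
    exact_mod_cast le_max_left (f (k-1)) (f k)
  have hMle2 : ((f k : ℚ) : ℝ) ≤ M := by
    rw [hM]
    exact_mod_cast le_max_right (f (k-1)) (f k)
  have hM1 : ((Aq:ℚ):ℝ) / (q:ℝ) ≤ M := by
    calc ((Aq:ℚ):ℝ) / (q:ℝ) = ((f (k-1) : ℚ) : ℝ) := by rw [hfk1]; push_cast; ring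
      _ ≤ M := hMle1
  have hM2 : (((Aq:ℚ):ℝ) + ((Dq:ℚ):ℝ) * ((Uq:ℚ):ℝ)) / ((q:ℝ) + (Uq:ℚ)) ≤ M := by
    calc (((Aq:ℚ):ℝ) + ((Dq:ℚ):ℝ) * ((Uq:ℚ):ℝ)) / ((q:ℝ) + (Uq:ℚ))
        = ((f k : ℚ) : ℝ) := by rw [hfk]; push_cast; ring
      _ ≤ M := hMle2
  constructor
  · -- membership
    have hqne : (q:ℝ) ≠ 0 := ne_of_gt hQR
    have hqune : (q:ℝ) + ((Uq:ℚ):ℝ) ≠ 0 := ne_of_gt hQUR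
    rcases le_or_gt (f k) (f (k-1)) with h | h
    · refine ⟨1/(q:ℝ), 0, (one_div_pos.mpr hQR).le, le_refl _, by field_simp; ring, ?_, ?_⟩
      · rw [← hUcast]
        have : ((Uq:ℚ):ℝ) * (1/(q:ℝ)) - 0 = ((Uq:ℚ):ℝ) / (q:ℝ) := by ring
        rw [this]
        exact (div_pos hUR hQR).le
      · rw [← hA, ← hD, hM, max_eq_left h, hfk1]
        push_cast
        field_simp
        ring
    · refine ⟨1/((q:ℝ)+((Uq:ℚ):ℝ)), ((Uq:ℚ):ℝ)/((q:ℝ)+((Uq:ℚ):ℝ)),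
        (one_div_pos.mpr hQUR).le, (div_pos hUR hQUR).le, by field_simp, ?_, ?_⟩
      · rw [← hUcast]
        have : ((Uq:ℚ):ℝ) * (1/((q:ℝ)+((Uq:ℚ):ℝ))) - ((Uq:ℚ):ℝ)/((q:ℝ)+((Uq:ℚ):ℝ)) = 0 := by
          ring
        rw [ge_iff_le, this]
      · rw [← hA, ← hD, hM, max_eq_right (le_of_lt h), hfk]
        push_cast
        field_simp
  · -- upper bound
    rintro y ⟨v, z, hv, hz, hsum, hcons, hy⟩
    rw [← hUcast] at hcons
    rw [← hA, ← hD] at hy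
    set A' := ((Aq:ℚ):ℝ)
    set D' := ((Dq:ℚ):ℝ)
    set U' := ((Uq:ℚ):ℝ)
    have h1 : A' ≤ M * (q:ℝ) := by
      rw [div_le_iff₀ hQR] at hM1; linarith
    have h2 : A' + D' * U' ≤ M * ((q:ℝ) + U') := by
      rw [div_le_iff₀ hQUR] at hM2; linarith
    have hc1 : z * (M * ((q:ℝ) + U') - (A' + D' * U')) ≥ 0 :=
      mul_nonneg hz (by linarith)
    have hc2 : (U' * v - z) * (M * (q:ℝ) - A') ≥ 0 :=
      mul_nonneg (by linarith) (by linarith)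
    have key : 0 ≤ U' * (M - y) := by
      have hid : U' * (M - y) =
          z * (M * ((q:ℝ) + U') - (A' + D' * U')) + (U' * v - z) * (M * (q:ℝ) - A') := by
        rw [hy]; linear_combination (-(U' * M)) * hsum
      rw [hid]; exact add_nonneg hc1 hc2
    nlinarith [key, hUR]
end

section
/- Let O, D, t₁, t₂ be integers and T a positive integer, and let η = |{k ∈ ℕ : t₁ ≤ O + k·T and O + k·T + D ≤ t₂}|. If t₁ ≤ O and O + D ≤ t₂, then η = ⌊(t₂ + T − D − O)/T⌋. -/
/-- If `t₁ ≤ O` and `O + D ≤ t₂`, then the number of jobs with release time and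
deadline inside `[t₁, t₂]` equals `⌊(t₂ + T − D − O)/T⌋`. -/
theorem stmt_17 (O D t₁ t₂ T : ℤ) (hT : 0 < T)
    (η : ℕ)
    (hη : η = {k : ℕ | t₁ ≤ O + (k : ℤ) * T ∧ O + (k : ℤ) * T + D ≤ t₂}.ncard)
    (h1 : t₁ ≤ O) (h2 : O + D ≤ t₂) :
    (η : ℤ) = ⌊((t₂ : ℚ) + (T : ℚ) - (D : ℚ) - (O : ℚ)) / (T : ℚ)⌋ := by
  set M : ℤ := t₂ - D - O with hM
  have hM0 : 0 ≤ M := by omega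
  have hdiv0 : 0 ≤ M / T := Int.ediv_nonneg hM0 hT.le
  have hset : {k : ℕ | t₁ ≤ O + (k : ℤ) * T ∧ O + (k : ℤ) * T + D ≤ t₂}
      = Set.Iic (M / T).toNat := by
    ext k
    simp only [Set.mem_setOf_eq, Set.mem_Iic]
    constructor
    · rintro ⟨-, hb⟩
      have hk : (k : ℤ) ≤ M / T := by
        rw [Int.le_ediv_iff_mul_le hT]; omega
      omega
    · intro hk
      have hk' : (k : ℤ) ≤ M / T := by omega
      have hmul := (Int.le_ediv_iff_mul_le hT).mp hk'
      have hk0 : 0 ≤ (k : ℤ) * T := mul_nonneg (by positivity) hT.le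
      omega
  have hcard : η = (M / T).toNat + 1 := by
    rw [hη, hset, ← Nat.card_coe_set_eq]
    simp [Nat.card_Iic]
  have hQ : ⌊((t₂ : ℚ) + (T : ℚ) - (D : ℚ) - (O : ℚ)) / (T : ℚ)⌋ = (M + T) / T := by
    have hTnat : (T : ℚ) = ((T.toNat : ℕ) : ℚ) := by
      have : ((T.toNat : ℤ)) = T := Int.toNat_of_nonneg hT.le
      exact_mod_cast this.symm
    have : ((t₂ : ℚ) + (T : ℚ) - (D : ℚ) - (O : ℚ)) = ((M + T : ℤ) : ℚ) := by
      rw [hM]; push_cast; ring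
    rw [this, hTnat, Rat.floor_intCast_div_natCast]
    congr 1; omega
  rw [hQ, hcard]
  have hadd : (M + T) / T = M / T + 1 := by
    have := Int.add_mul_ediv_right M 1 hT.ne'
    simpa using this
  omega
end

section
/- Let O, D, t₁, t₂ be integers and T a positive integer, and let η = |{k ∈ ℕ : t₁ ≤ O + k·T and O + k·T + D ≤ t₂}|. If O < t₁ and t₂ − t₁ ≥ D, then η = ⌊(t₂ + T − D − O)/T⌋ − ⌈(t₁ − O)/T⌉. -/
/-- If `O < t₁` and `t₂ − t₁ ≥ D`, then the number of jobs with release time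
and deadline inside `[t₁, t₂]` equals `⌊(t₂ + T − D − O)/T⌋ − ⌈(t₁ − O)/T⌉`. -/
theorem stmt_18 (O D t₁ t₂ T : ℤ) (hT : 0 < T)
    (η : ℕ)
    (hη : η = {k : ℕ | t₁ ≤ O + (k : ℤ) * T ∧ O + (k : ℤ) * T + D ≤ t₂}.ncard)
    (h1 : O < t₁) (h2 : t₂ - t₁ ≥ D) :
    (η : ℤ) = ⌊((t₂ : ℚ) + (T : ℚ) - (D : ℚ) - (O : ℚ)) / (T : ℚ)⌋ -
      ⌈((t₁ : ℚ) - (O : ℚ)) / (T : ℚ)⌉ := by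
  have hTQ : (0:ℚ) < T := by exact_mod_cast hT
  set a := ⌈((t₁ : ℚ) - (O : ℚ)) / (T : ℚ)⌉ with ha
  set b := ⌊((t₂ : ℚ) + (T : ℚ) - (D : ℚ) - (O : ℚ)) / (T : ℚ)⌋ with hb
  have hak : ∀ k : ℤ, a ≤ k ↔ t₁ ≤ O + k * T := by
    intro k
    rw [ha, Int.ceil_le, div_le_iff₀ hTQ]
    constructor <;> intro h
    · have : (t₁:ℚ) ≤ O + k * T := by linarith
      exact_mod_cast this
    · have : (t₁:ℚ) ≤ (O:ℚ) + (k:ℚ) * T := by exact_mod_cast h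
      linarith
  have hbk : ∀ k : ℤ, k ≤ b - 1 ↔ O + k * T + D ≤ t₂ := by
    intro k
    rw [hb]
    have : k ≤ b - 1 ↔ (k:ℤ) + 1 ≤ b := by omega
    rw [hb] at this
    rw [this, Int.le_floor, le_div_iff₀ hTQ]
    constructor <;> intro h
    · have : (O:ℚ) + k * T + D ≤ t₂ := by push_cast at h ⊢; linarith
      exact_mod_cast this
    · have : (O:ℚ) + (k:ℚ) * T + D ≤ t₂ := by exact_mod_cast h
      push_cast
      linarith
  have ha1 : 1 ≤ a := by
    rw [ha]
    have : (0:ℚ) < ((t₁ : ℚ) - (O : ℚ)) / (T : ℚ) := by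
      apply div_pos _ hTQ
      have : (O:ℚ) < t₁ := by exact_mod_cast h1
      linarith
    exact Int.ceil_pos.mpr this
  have hab : a ≤ b := by
    have he : ((t₂ : ℚ) + (T : ℚ) - (D : ℚ) - (O : ℚ)) / (T : ℚ)
        = ((t₂ : ℚ) - (D : ℚ) - (O : ℚ)) / (T : ℚ) + 1 := by
      field_simp
      ring
    rw [hb, he, Int.floor_add_one]
    have hle : ((t₁ : ℚ) - (O : ℚ)) / (T : ℚ) ≤ ((t₂ : ℚ) - (D : ℚ) - (O : ℚ)) / (T : ℚ) := by
      gcongr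
      have : (t₁:ℤ) ≤ t₂ - D := by omega
      exact_mod_cast this
    calc a ≤ ⌈((t₂ : ℚ) - (D : ℚ) - (O : ℚ)) / (T : ℚ)⌉ := Int.ceil_mono hle
      _ ≤ ⌊((t₂ : ℚ) - (D : ℚ) - (O : ℚ)) / (T : ℚ)⌋ + 1 := Int.ceil_le_floor_add_one _
  have hset : {k : ℕ | t₁ ≤ O + (k : ℤ) * T ∧ O + (k : ℤ) * T + D ≤ t₂}
      = ↑(Finset.Icc a.toNat (b-1).toNat) := by
    ext k
    simp only [Set.mem_setOf_eq, Finset.coe_Icc, Set.mem_Icc, ← hak (k:ℤ), ← hbk (k:ℤ)]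
    omega
  rw [hη, hset, Set.ncard_coe_finset, Nat.card_Icc]
  omega
end
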